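/- arXiv:2603.15451 — 5 statements merged into one kernel-verified Lean document; each statement's English description precedes it below -/
import Mathlib

section
/- Let a, b be coprime positive integers and fix k with 0 ≤ k < b. A chip configuration D with 0 ≤ D(i) < a for all i ∈ {1,…,b} is k-skeletal if and only if the path lpath(D) is k-skeletal. -/
/-- A lattice path is a list of steps, `true` = north step, `false` = east step.
`Q` is a path from `(0,0)` to `(a,b)` iff it has `b` norths and `a` easts. -/
def IsPath (a b : ℕ) (Q : List Bool) : Prop :=
  Q.count true = b ∧ Q.count false = a

/-- Level `a·y − b·x` of the lattice point reached after the first `m` steps. -/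
def lvlAt (a b : ℕ) (Q : List Bool) (m : ℕ) : ℤ :=
  (a : ℤ) * ((Q.take m).count true : ℤ) - (b : ℤ) * ((Q.take m).count false : ℤ)

/-- Condition (R1): the last `k+1` north steps of `Q` start at nonnegative
level (a north step at index `m` is among the last `k+1` norths iff at most `k`
norths occur strictly after it). -/
def R1 (a b k : ℕ) (Q : List Bool) : Prop :=
  ∀ m < Q.length, Q.getD m false = true → (Q.drop (m + 1)).count true ≤ k →
    0 ≤ lvlAt a b Q m

/-- `Q` is an `(a,b)`-Dyck path: every north step starts at nonnegative level. -/
def IsDyck (a b : ℕ) (Q : List Bool) : Prop :=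
  ∀ m < Q.length, Q.getD m false = true → 0 ≤ lvlAt a b Q m

/-- `Q` is `k`-skeletal: (R1) holds, and (R2) every cyclic shift of `Q` at a
lattice point of positive level fails (R1).  (The cyclic shift of `Q` at the
point reached after `m` steps is `Q.rotate m`.) -/
def SkeletalPath (a b k : ℕ) (Q : List Bool) : Prop :=
  R1 a b k Q ∧ ∀ m ≤ Q.length, 0 < lvlAt a b Q m → ¬ R1 a b k (Q.rotate m)

/-- A labeled path: `none` = east step, `some i` = north step labeled `i`.
It has `a` east steps, each label `1,…,b` exactly once, and labels increase
along each run of consecutive north steps. -/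
def IsLabeled (a b : ℕ) (L : List (Option (Fin b))) : Prop :=
  L.count none = a ∧ (∀ i : Fin b, L.count (some i) = 1) ∧
  ∀ m : ℕ, ∀ i j : Fin b, L.getD m none = some i → L.getD (m + 1) none = some j → i < j

/-- The underlying unlabeled path of a labeled path. -/
def unlabel {b : ℕ} (L : List (Option (Fin b))) : List Bool :=
  L.map Option.isSome

/-- The cluster-fire move `φ_S` for the quantized rational model on the
complete graph (`c = 1`): each `i ∈ S` loses `1 + ⌊(b−s)·a/b⌋` chips and each
`j ∉ S` gains `⌊s·a/b⌋` chips, where `s = |S|`. -/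
def cfire (a b : ℕ) (S : Finset (Fin b)) (D : Fin b → ℤ) : Fin b → ℤ :=
  fun i =>
    if i ∈ S then D i - 1 - (((b - S.card) * a / b : ℕ) : ℤ)
    else D i + ((S.card * a / b : ℕ) : ℤ)

/-- The borrow move `β_S = φ_S⁻¹`. -/
def cborrow (a b : ℕ) (S : Finset (Fin b)) (D : Fin b → ℤ) : Fin b → ℤ :=
  fun i =>
    if i ∈ S then D i + 1 + (((b - S.card) * a / b : ℕ) : ℤ)
    else D i - ((S.card * a / b : ℕ) : ℤ)

/-- `D` is `k`-stable: `D ≥ 0` and no `k`-firing move `φ_S` (with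
`0 < |S| ≤ k+1`) is legal on `D`. -/
def KStable (a b k : ℕ) (D : Fin b → ℤ) : Prop :=
  (∀ i, 0 ≤ D i) ∧ ∀ S : Finset (Fin b), S.Nonempty → S.card ≤ k + 1 →
    ¬ (∀ i, 0 ≤ cfire a b S D i)

/-- `D` is `k`-skeletal: `D` is `k`-stable and no legal nonempty borrow move
produces a `k`-stable configuration. -/
def KSkeletal (a b k : ℕ) (D : Fin b → ℤ) : Prop :=
  KStable a b k D ∧ ∀ T : Finset (Fin b), T.Nonempty →
    (∀ i, 0 ≤ cborrow a b T D i) → ¬ KStable a b k (cborrow a b T D)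

/-- `i` is poorer than `j` in configuration `D`. -/
def Poorer {b : ℕ} (D : Fin b → ℤ) (i j : Fin b) : Prop :=
  D i < D j ∨ (D i = D j ∧ i < j)

/-- `L` is the labeled path `lpath D`: a valid labeled path in which the north
step labeled `i` lies in column `D i`, i.e. is preceded by exactly `D i` east
steps.  (These conditions determine `L` uniquely.) -/
def IsLpath (a b : ℕ) (D : Fin b → ℤ) (L : List (Option (Fin b))) : Prop :=
  IsLabeled a b L ∧
  ∀ m : ℕ, ∀ i : Fin b, L.getD m none = some i → ((L.take m).count none : ℤ) = D i

/- ## Generic list lemmas -/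

lemma skel_getD_take (l : List Bool) {m n : ℕ} (h : n < m) (d : Bool) :
    (l.take m).getD n d = l.getD n d := by
  simp [List.getD_eq_getElem?_getD, List.getElem?_take, h]

lemma skel_getD_drop (l : List Bool) (m n : ℕ) (d : Bool) :
    (l.drop m).getD n d = l.getD (m + n) d := by
  simp [List.getD_eq_getElem?_getD, List.getElem?_drop]

lemma skel_getD_mem {α : Type*} (l : List α) {n : ℕ} (h : n < l.length) (d : α) :
    l.getD n d ∈ l := by
  have : l.getD n d = l[n] := by simp [List.getD_eq_getElem?_getD, List.getElem?_eq_getElem h]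
  rw [this]; exact List.getElem_mem h

lemma skel_count_tf (l : List Bool) : l.count true + l.count false = l.length := by
  induction l with
  | nil => simp
  | cons h t ih => cases h <;> simp [List.count_cons] <;> omega

lemma skel_count_take_mono (l : List Bool) {m n : ℕ} (h : m ≤ n) (x : Bool) :
    (l.take m).count x ≤ (l.take n).count x := by
  have : l.take n = l.take m ++ (l.drop m).take (n - m) := by
    rw [← List.take_add]; congr 1; omega
  rw [this, List.count_append]; omega

lemma skel_take_succ (l : List Bool) (n : ℕ) (h : n < l.length) :
    l.take (n+1) = l.take n ++ [l.getD n false] := by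
  have hg : l.getD n false = l.get ⟨n, h⟩ := by
    simp [List.getD_eq_getElem?_getD, List.getElem?_eq_getElem h]
  rw [hg]
  rw [List.take_succ, List.getElem?_eq_getElem h]; rfl

lemma skel_count_take_succ (l : List Bool) (n : ℕ) (h : n < l.length) (x : Bool) :
    (l.take (n+1)).count x = (l.take n).count x + (if l.getD n false = x then 1 else 0) := by
  rw [List.take_succ, List.getElem?_eq_getElem h, List.count_append]
  have hg : l.getD n false = l[n] := by
    simp [List.getD_eq_getElem?_getD, List.getElem?_eq_getElem h]
  rw [hg]
  simp [List.count_singleton']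

/-- two distinct positions with the same value give count ≥ 2 -/
lemma skel_two_le_count {α : Type*} [BEq α] [LawfulBEq α] (l : List α) (d : α) (x : α)
    (m₁ m₂ : ℕ) (h12 : m₁ < m₂) (h2 : m₂ < l.length)
    (g1 : l.getD m₁ d = x) (g2 : l.getD m₂ d = x) : 2 ≤ l.count x := by
  have e : l = l.take m₂ ++ l.drop m₂ := (List.take_append_drop m₂ l).symm
  have h1 : x ∈ l.take m₂ := by
    have hm1 : m₁ < (l.take m₂).length := by rw [List.length_take]; omega
    have e1 : (l.take m₂).getD m₁ d = l.getD m₁ d := by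
      simp [List.getD_eq_getElem?_getD, List.getElem?_take, h12]
    rw [← g1, ← e1]; exact skel_getD_mem _ hm1 d
  have h2' : x ∈ l.drop m₂ := by
    have hlen : 0 < (l.drop m₂).length := by rw [List.length_drop]; omega
    have e2 : (l.drop m₂).getD 0 d = l.getD (m₂ + 0) d := by
      simp [List.getD_eq_getElem?_getD, List.getElem?_drop]
    rw [← g2, show m₂ = m₂ + 0 from rfl, ← e2]
    exact skel_getD_mem _ hlen d
  have c1 : 0 < (l.take m₂).count x := List.count_pos_iff.mpr h1
  have c2 : 0 < (l.drop m₂).count x := List.count_pos_iff.mpr h2'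
  have : l.count x = (l.take m₂).count x + (l.drop m₂).count x := by
    conv_lhs => rw [e]
    exact List.count_append
  omega

/-- count over a prefix as a cardinality of positions -/
lemma skel_count_take_card (l : List Bool) (m : ℕ) (hm : m ≤ l.length) :
    (l.take m).count true = ((Finset.range m).filter fun q => l.getD q false = true).card := by
  induction m with
  | zero => simp
  | succ n ih =>
    have hn : n < l.length := by omega
    rw [skel_count_take_succ l n hn, ih (by omega), Finset.range_add_one, Finset.filter_insert]
    split
    · rw [Finset.card_insert_of_notMem (by simp)]
    · simp

/- ## Arithmetic lemmas -/

/-- bridge between floors and multiplied inequalities -/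
lemma skel_bridge (a b n : ℕ) (hb : 0 < b) (z : ℤ) :
    (1 + (n * a / b : ℕ) : ℤ) ≤ z ↔ (a : ℤ) * n < b * z := by
  have hdm : n * a = b * (n * a / b) + n * a % b := (Nat.div_add_mod _ _).symm
  have hmod : n * a % b < b := Nat.mod_lt _ hb
  set q : ℕ := n * a / b with hq
  set r : ℕ := n * a % b with hr
  have key : (a : ℤ) * n = b * q + r := by push_cast [mul_comm (a:ℤ) (n:ℤ)]; exact_mod_cast hdm
  have hbz : (0 : ℤ) < b := by exact_mod_cast hb
  constructor
  · intro h
    have h2 : (b : ℤ) * (1 + q) ≤ b * z := mul_le_mul_of_nonneg_left h (by positivity)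
    have hrb : (r : ℤ) < b := by exact_mod_cast hmod
    nlinarith
  · intro h
    have hr0 : (0 : ℤ) ≤ r := by positivity
    have h2 : (b : ℤ) * q < b * z := by nlinarith
    have h3 : (q : ℤ) < z := lt_of_mul_lt_mul_left h2 (le_of_lt hbz)
    omega

/-- helper : division with explicit quotient/remainder -/
lemma skel_div_eq (b m q r : ℕ) (hb : 0 < b) (h : m = b * q + r) (hr : r < b) : m / b = q := by
  subst h
  rw [Nat.mul_add_div hb, Nat.div_eq_of_lt hr]
  omega

/-- all the facts about `c = (t*a-1)/b` -/
lemma skel_bor (a b t : ℕ) (ha : 0 < a) (hb : 0 < b) (hab : a.Coprime b)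
    (ht1 : 1 ≤ t) (ht2 : t ≤ b) :
    (t * a - 1) / b < a ∧
    (b - t) * a / b = a - 1 - ((t * a - 1) / b) ∧
    (t < b → t * a / b = (t * a - 1) / b) ∧
    (1 : ℤ) ≤ (t : ℤ) * a - b * ((t * a - 1) / b : ℕ) ∧
    ((t : ℤ) * a - b * ((t * a - 1) / b : ℕ)) ≤ b := by
  set c : ℕ := (t * a - 1) / b with hc
  set r : ℕ := (t * a - 1) % b with hr
  have hta : 1 ≤ t * a := Nat.one_le_iff_ne_zero.mpr (by positivity)
  have hdm : t * a - 1 = b * c + r := (Nat.div_add_mod _ _).symm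
  have hrb : r < b := Nat.mod_lt _ hb
  have hkey : t * a = b * c + r + 1 := by omega
  have htb : t * a ≤ b * a := Nat.mul_le_mul_right a ht2
  have hca : c < a := by
    rcases Nat.lt_or_ge c a with h | h
    · exact h
    · exfalso
      have : b * a ≤ b * c := Nat.mul_le_mul_left b h
      omega
  refine ⟨hca, ?_, ?_, ?_, ?_⟩
  · -- (b-t)*a/b = a - 1 - c
    apply skel_div_eq b _ _ (b - r - 1) hb _ (by omega)
    have e1 : (b - t) * a = b * a - t * a := Nat.sub_mul b t a
    have e2 : b * (a - 1 - c) = b * a - b - b * c := by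
      rw [Nat.mul_sub, Nat.mul_sub, mul_one]
    have e3 : b * c ≤ b * (a - 1) := Nat.mul_le_mul_left b (by omega)
    have e4 : b * (a - 1) = b * a - b := by rw [Nat.mul_sub, mul_one]
    have h5 : b ≤ b * a := Nat.le_mul_of_pos_right b ha
    have h6 : b * c ≤ b * a - b := by rw [e4] at e3; exact e3
    rw [e1, e2]
    zify [htb, h5, h6, (show r ≤ b by omega), (show 1 ≤ b - r by omega)]
    have hkey' : (t:ℤ)*a = b*c + r + 1 := by exact_mod_cast hkey
    linarith
  · -- t < b → t*a/b = c
    intro htlt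
    have hnd : ¬ b ∣ t * a := by
      intro hdvd
      have : b ∣ t := (Nat.Coprime.dvd_of_dvd_mul_right (hab.symm)) hdvd
      have := Nat.le_of_dvd (by omega) this
      omega
    have hrlt : r + 1 < b := by
      rcases Nat.lt_or_ge (r+1) b with h | h
      · exact h
      · exfalso
        have : r + 1 = b := by omega
        apply hnd
        rw [hkey]
        exact ⟨c + 1, by rw [Nat.mul_add, mul_one]; omega⟩
    exact skel_div_eq b _ _ (r+1) hb (by omega) hrlt
  · have : (t:ℤ) * a = b * c + r + 1 := by exact_mod_cast hkey
    linarith [(by positivity : (0:ℤ) ≤ (r:ℤ))]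
  · have : (t:ℤ) * a = b * c + r + 1 := by exact_mod_cast hkey
    have : (r:ℤ) < b := by exact_mod_cast hrb
    linarith [(by exact_mod_cast hkey : (t:ℤ) * a = b * c + r + 1)]

section core
variable {b : ℕ} (a k : ℕ) (β : Fin b → ℤ) (ρ : Fin b → ℕ)

/-- CORE1 : from "levels of last k+1 rotated rows nonneg" to the counting bound -/
lemma skel_core1 (hb : 0 < b) (hρb : ∀ i, ρ i < b) (hinj : Function.Injective ρ)
    (hsurj : ∀ ν, ν < b → ∃ i, ρ i = ν)
    (hmono : ∀ i j, ρ i ≤ ρ j → β i ≤ β j)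
    (H0 : ∀ i, b - 1 - k ≤ ρ i → 0 ≤ (a : ℤ) * ρ i - b * β i) :
    ∀ s, 1 ≤ s → s ≤ k + 1 →
      (Finset.univ.filter fun i => (a : ℤ) * ((b - s : ℕ) : ℤ) < b * β i).card ≤ s - 1 := by
  intro s hs1 hs2
  have hsub : (Finset.univ.filter fun i => (a : ℤ) * ((b - s : ℕ) : ℤ) < b * β i) ⊆
      Finset.univ.filter fun i => b - s + 1 ≤ ρ i := by
    intro i hi
    rw [Finset.mem_filter] at hi ⊢
    refine ⟨Finset.mem_univ _, ?_⟩
    by_contra hcon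
    push_neg at hcon
    have hle : ρ i ≤ b - s := by omega
    have key : (b : ℤ) * β i ≤ (a : ℤ) * ((b - s : ℕ) : ℤ) := by
      rcases le_or_gt (b - 1 - k) (ρ i) with hcase | hcase
      · have h0 := H0 i hcase
        have : (a : ℤ) * ρ i ≤ (a : ℤ) * ((b - s : ℕ) : ℤ) := by
          apply mul_le_mul_of_nonneg_left _ (by positivity)
          exact_mod_cast hle
        linarith
      · obtain ⟨j, hj⟩ := hsurj (b - 1 - k) (by omega)
        have hij : ρ i ≤ ρ j := by omega
        have hββ : β i ≤ β j := hmono i j hij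
        have h0 := H0 j (by omega)
        have h1 : (a : ℤ) * ρ j ≤ (a : ℤ) * ((b - s : ℕ) : ℤ) := by
          apply mul_le_mul_of_nonneg_left _ (by positivity)
          have : ρ j ≤ b - s := by omega
          exact_mod_cast this
        have h2 : (b : ℤ) * β i ≤ (b : ℤ) * β j :=
          mul_le_mul_of_nonneg_left hββ (by positivity)
        linarith
    exact absurd hi.2 (not_lt.mpr key)
  have hcard2 : (Finset.univ.filter fun i => b - s + 1 ≤ ρ i).card ≤ s - 1 := by
    have : (Finset.univ.filter fun i => b - s + 1 ≤ ρ i).card ≤ (Finset.Ico (b - s + 1) b).card := by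
      apply Finset.card_le_card_of_injOn ρ
      · intro i hi
        rw [Finset.mem_coe, Finset.mem_filter] at hi
        rw [Finset.mem_coe, Finset.mem_Ico]
        exact ⟨hi.2, hρb i⟩
      · intro i _ j _ hij
        exact hinj hij
    rw [Nat.card_Ico] at this
    omega
  calc _ ≤ _ := Finset.card_le_card hsub
    _ ≤ s - 1 := hcard2

/-- CORE2 : from the counting bound to "levels of last k+1 rotated rows nonneg" -/
lemma skel_core2 (hb : 0 < b) (hρb : ∀ i, ρ i < b) (hinj : Function.Injective ρ)
    (hsurj : ∀ ν, ν < b → ∃ i, ρ i = ν)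
    (hmono : ∀ i j, ρ i ≤ ρ j → β i ≤ β j)
    (HC : ∀ s, 1 ≤ s → s ≤ k + 1 →
      (Finset.univ.filter fun i => (a : ℤ) * ((b - s : ℕ) : ℤ) < b * β i).card ≤ s - 1) :
    ∀ i, b - 1 - k ≤ ρ i → 0 ≤ (a : ℤ) * ρ i - b * β i := by
  intro i hi
  by_contra hneg
  push_neg at hneg
  set s : ℕ := b - ρ i with hs
  have hρib := hρb i
  have hs1 : 1 ≤ s := by omega
  have hs2 : s ≤ k + 1 := by omega
  have hbs : (b - s : ℕ) = ρ i := by omega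
  have hsubset : (Finset.univ.filter fun j => ρ i ≤ ρ j) ⊆
      Finset.univ.filter fun j => (a : ℤ) * ((b - s : ℕ) : ℤ) < b * β j := by
    intro j hj
    rw [Finset.mem_filter] at hj ⊢
    refine ⟨Finset.mem_univ _, ?_⟩
    have hββ : β i ≤ β j := hmono i j hj.2
    have h2 : (b : ℤ) * β i ≤ (b : ℤ) * β j := mul_le_mul_of_nonneg_left hββ (by positivity)
    rw [hbs]
    linarith
  have hub := HC s hs1 hs2
  have hlb : s ≤ (Finset.univ.filter fun j => ρ i ≤ ρ j).card := by
    have : (Finset.Ico (ρ i) b).card ≤ (Finset.univ.filter fun j => ρ i ≤ ρ j).card := by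
      apply Finset.card_le_card_of_injOn (fun ν => if h : ν < b then (hsurj ν h).choose else i)
      · intro ν hν
        rw [Finset.mem_coe, Finset.mem_Ico] at hν
        rw [Finset.mem_coe, Finset.mem_filter]
        refine ⟨Finset.mem_univ _, ?_⟩
        beta_reduce
        rw [dif_pos hν.2]
        rw [(hsurj ν hν.2).choose_spec]
        exact hν.1
      · intro ν hν μ hμ h
        rw [Finset.mem_coe, Finset.mem_Ico] at hν hμ
        simp only [dif_pos hν.2, dif_pos hμ.2] at h
        have e1 := (hsurj ν hν.2).choose_spec
        have e2 := (hsurj μ hμ.2).choose_spec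
        rw [← e1, ← e2, h]
    rw [Nat.card_Ico] at this
    omega
  have := Finset.card_le_card hsubset
  omega

end core

/- ## unlabel counting -/

lemma skel_ucount_false {α : Type*} [DecidableEq α] (l : List (Option α)) :
    (l.map Option.isSome).count false = l.count none := by
  induction l with
  | nil => simp
  | cons o t ih =>
    cases o <;> simp [List.count_cons, ih]

lemma skel_ucount_true {α : Type*} [Fintype α] [DecidableEq α] (l : List (Option α)) :
    (l.map Option.isSome).count true = ∑ i : α, l.count (some i) := by
  induction l with
  | nil => simp
  | cons o t ih =>
    cases o with
    | none => simpa [List.count_cons] using ih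
    | some j =>
      simp only [List.map_cons, Option.isSome_some, List.count_cons, ih]
      rw [Finset.sum_add_distrib]
      simp [Finset.sum_ite_eq' Finset.univ j (fun _ => 1)]

/- ## the rank permutation ρ0 -/

lemma skel_rho (b y : ℕ) (hy : y ≤ b) (row : Fin b → ℕ) (hlt : ∀ i, row i < b)
    (hinj : ∀ i j : Fin b, row i = row j → i = j) (hsurj : ∀ ν, ν < b → ∃ i, row i = ν)
    (ρ0 : Fin b → ℕ) (hρ0 : ∀ i, ρ0 i = if y ≤ row i then row i - y else row i + (b - y)) :
    (∀ i, ρ0 i < b) ∧ Function.Injective ρ0 ∧ (∀ ν, ν < b → ∃ i, ρ0 i = ν) := by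
  refine ⟨?_, ?_, ?_⟩
  · intro i
    have := hlt i
    rw [hρ0]
    split <;> omega
  · intro i j hij
    rw [hρ0 i, hρ0 j] at hij
    apply hinj
    have hi := hlt i
    have hj := hlt j
    rcases le_or_gt y (row i) with h1 | h1 <;> rcases le_or_gt y (row j) with h2 | h2
    · rw [if_pos h1, if_pos h2] at hij; omega
    · rw [if_pos h1, if_neg (by omega)] at hij; omega
    · rw [if_neg (by omega), if_pos h2] at hij; omega
    · rw [if_neg (by omega), if_neg (by omega)] at hij; omega
  · intro ν hν
    rcases Nat.lt_or_ge ν (b - y) with h | h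
    · obtain ⟨i, hi⟩ := hsurj (ν + y) (by omega)
      exact ⟨i, by rw [hρ0, hi, if_pos (by omega)]; omega⟩
    · obtain ⟨i, hi⟩ := hsurj (ν - (b - y)) (by omega)
      exact ⟨i, by rw [hρ0, hi, if_neg (by omega)]; omega⟩

lemma skel_rho_mono (a b y : ℕ) (e : ℤ) (row : Fin b → ℕ) (γ ncol : Fin b → ℤ)
    (ρ0 : Fin b → ℕ)
    (hρ0 : ∀ i, ρ0 i = if y ≤ row i then row i - y else row i + (b - y))
    (hncol : ∀ i, ncol i = γ i - e + (if y ≤ row i then 0 else (a : ℤ)))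
    (hmono : ∀ i j, row i ≤ row j → γ i ≤ γ j)
    (hγ0 : ∀ i, 0 ≤ γ i) (hγa : ∀ i, γ i < a)
    (hlt : ∀ i, row i < b) :
    ∀ i j, ρ0 i ≤ ρ0 j → ncol i ≤ ncol j := by
  intro i j hij
  rw [hρ0 i, hρ0 j] at hij
  rw [hncol i, hncol j]
  have hi := hlt i
  have hj := hlt j
  rcases le_or_gt y (row i) with h1 | h1 <;> rcases le_or_gt y (row j) with h2 | h2
  · rw [if_pos h1, if_pos h2] at hij ⊢
    have : row i ≤ row j := by omega
    have := hmono i j this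
    linarith
  · rw [if_pos h1, if_neg (by omega)] at hij ⊢
    have := hγa i
    have := hγ0 j
    linarith
  · rw [if_neg (by omega), if_pos h2] at hij ⊢
    omega
  · rw [if_neg (by omega), if_neg (by omega)] at hij ⊢
    have : row i ≤ row j := by omega
    have := hmono i j this
    linarith

/- ## counting norths in a prefix via positions -/

lemma skel_count_pos (a b : ℕ) (Q : List Bool) (hQlen : Q.length = a + b)
    (p : Fin b → ℕ)
    (hp_lt : ∀ i, p i < a + b)
    (hp_true : ∀ i, Q.getD (p i) false = true)
    (hp_surj : ∀ q, q < a + b → Q.getD q false = true → ∃ i, p i = q)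
    (hp_inj : Function.Injective p)
    (m : ℕ) (hm : m ≤ a + b) :
    (Q.take m).count true = (Finset.univ.filter fun i : Fin b => p i < m).card := by
  rw [skel_count_take_card Q m (by omega)]
  symm
  apply Finset.card_bij (fun i _ => p i)
  · intro i hi
    rw [Finset.mem_filter] at hi ⊢
    exact ⟨Finset.mem_range.mpr hi.2, hp_true i⟩
  · intro i _ j _ h
    exact hp_inj h
  · intro q hq
    rw [Finset.mem_filter, Finset.mem_range] at hq
    obtain ⟨i, hi⟩ := hp_surj q (by omega) hq.2
    exact ⟨i, Finset.mem_filter.mpr ⟨Finset.mem_univ _, by omega⟩, hi⟩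

def KStable' (a b k : ℕ) (D : Fin b → ℤ) : Prop :=
  (∀ i, 0 ≤ D i) ∧ ∀ S : Finset (Fin b), S.Nonempty → S.card ≤ k + 1 →
    ¬ (∀ i, 0 ≤ (if i ∈ S then D i - 1 - (((b - S.card) * a / b : ℕ) : ℤ)
      else D i + ((S.card * a / b : ℕ) : ℤ)))

/-- counting characterization of stability -/
lemma skel_stable_iff (a b k : ℕ) (hb : 0 < b) (β : Fin b → ℤ) :
    KStable' a b k β ↔ ((∀ i, 0 ≤ β i) ∧ ∀ s, 1 ≤ s → s ≤ k + 1 →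
      (Finset.univ.filter fun i => (a : ℤ) * ((b - s : ℕ) : ℤ) < b * β i).card ≤ s - 1) := by
  constructor
  · rintro ⟨h0, hfire⟩
    refine ⟨h0, ?_⟩
    intro s hs1 hs2
    by_contra hcon
    push_neg at hcon
    have hsle : s ≤ (Finset.univ.filter fun i => (a : ℤ) * ((b - s : ℕ) : ℤ) < b * β i).card := by
      omega
    obtain ⟨S, hSsub, hScard⟩ := Finset.exists_subset_card_eq hsle
    apply hfire S (Finset.card_pos.mp (by omega)) (by omega)
    intro i
    by_cases hiS : i ∈ S
    · rw [if_pos hiS, hScard]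
      have hmem := hSsub hiS
      rw [Finset.mem_filter] at hmem
      have := (skel_bridge a b (b - s) hb (β i)).mpr hmem.2
      push_cast at this ⊢
      linarith
    · rw [if_neg hiS]
      have : (0:ℤ) ≤ ((S.card * a / b : ℕ) : ℤ) := by positivity
      linarith [h0 i]
  · rintro ⟨h0, hcount⟩
    refine ⟨h0, ?_⟩
    intro S hSne hScard hfire
    have hs1 : 1 ≤ S.card := Finset.card_pos.mpr hSne
    have hsub : S ⊆ Finset.univ.filter fun i => (a : ℤ) * ((b - S.card : ℕ) : ℤ) < b * β i := by
      intro i hiS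
      rw [Finset.mem_filter]
      refine ⟨Finset.mem_univ _, ?_⟩
      have := hfire i
      rw [if_pos hiS] at this
      apply (skel_bridge a b (b - S.card) hb (β i)).mp
      push_cast at this ⊢
      linarith
    have := Finset.card_le_card hsub
    have := hcount S.card hs1 hScard
    omega

/-- The rotation dictionary: R1 of the rotated path, in terms of per-label data. -/
lemma skel_dict (a b k : ℕ) (Q : List Bool)
    (hQt : Q.count true = b) (hQf : Q.count false = a)
    (p : Fin b → ℕ) (colZ : Fin b → ℤ)
    (hp_lt : ∀ i, p i < a + b)
    (hp_true : ∀ i, Q.getD (p i) false = true)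
    (hp_surj : ∀ q, q < a + b → Q.getD q false = true → ∃ i, p i = q)
    (hcol : ∀ i, (colZ i) = ((Q.take (p i)).count false : ℤ))
    (row ρ0 : Fin b → ℕ) (ncol : Fin b → ℤ)
    (m : ℕ) (hm : m ≤ a + b) (y x : ℕ)
    (hy : y = (Q.take m).count true) (hx : x = (Q.take m).count false)
    (hrowq : ∀ i, row i = (Q.take (p i)).count true)
    (hρ0q : ∀ i, ρ0 i = if y ≤ row i then row i - y else row i + (b - y))
    (hncolq : ∀ i, ncol i = colZ i - x + (if y ≤ row i then 0 else (a : ℤ))) :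
    R1 a b k (Q.rotate m) ↔
      ∀ i : Fin b, b - 1 - k ≤ ρ0 i → (b : ℤ) * ncol i ≤ (a : ℤ) * (ρ0 i : ℤ) := by
  have hQlen : Q.length = a + b := by have := skel_count_tf Q; omega
  obtain ⟨rpos, hrpos⟩ : ∃ f : Fin b → ℕ,
      ∀ i, f i = if m ≤ p i then p i - m else p i + ((a + b) - m) := ⟨_, fun _ => rfl⟩
  set R : List Bool := Q.drop m ++ Q.take m with hRdef
  have hrot : Q.rotate m = R := List.rotate_eq_drop_append_take (hQlen ▸ hm)
  have hQsplit : Q = Q.take m ++ Q.drop m := (List.take_append_drop m Q).symm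
  have hdroplen : (Q.drop m).length = (a + b) - m := by rw [List.length_drop, hQlen]
  have htakelen : (Q.take m).length = m := by rw [List.length_take, hQlen]; omega
  have hlenR : R.length = a + b := by
    rw [hRdef, List.length_append, hdroplen, htakelen]; omega
  have hcnt_split : ∀ z : Bool, (Q.take m).count z + (Q.drop m).count z = Q.count z := by
    intro z; conv_rhs => rw [hQsplit]
    rw [List.count_append]
  have hcnt_full : ∀ (l : List Bool) (z : Bool), (l.take l.length).count z = l.count z := by
    intro l z; rw [List.take_length]
  have hyb : y ≤ b := by
    rw [hy, ← hQt, ← hcnt_full Q true, hQlen]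
    exact skel_count_take_mono Q (by omega) true
  have hxa : x ≤ a := by
    rw [hx, ← hQf, ← hcnt_full Q false, hQlen]
    exact skel_count_take_mono Q (by omega) false
  -- case criterion
  have hcase : ∀ i : Fin b, m ≤ p i ↔ y ≤ row i := by
    intro i
    constructor
    · intro h
      rw [hy, hrowq]
      exact skel_count_take_mono Q h true
    · intro h
      by_contra hcon
      push_neg at hcon
      have h1 : (Q.take (p i + 1)).count true = row i + 1 := by
        rw [skel_count_take_succ Q (p i) (by rw [hQlen]; exact hp_lt i) true, hp_true i,
          if_pos rfl, hrowq]
      have h2 : (Q.take (p i + 1)).count true ≤ y := by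
        rw [hy]; exact skel_count_take_mono Q (by omega) true
      omega
  -- row bound
  have hrowb : ∀ i, row i < b := by
    intro i
    have hpi := hp_lt i
    have h1 : (Q.take (p i + 1)).count true = row i + 1 := by
      rw [skel_count_take_succ Q (p i) (by rw [hQlen]; exact hp_lt i) true, hp_true i,
        if_pos rfl, hrowq]
    have h2 : (Q.take (p i + 1)).count true ≤ b := by
      rw [← hQt, ← hcnt_full Q true, hQlen]
      exact skel_count_take_mono Q (by omega) true
    omega
  -- the key per-label facts
  have key : ∀ i : Fin b, (rpos i < a + b) ∧ R.getD (rpos i) false = true ∧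
      ((R.take (rpos i)).count true = ρ0 i) ∧
      (((R.take (rpos i)).count false : ℤ) = ncol i) := by
    intro i
    have hpi := hp_lt i
    by_cases hmp : m ≤ p i
    · have hyr : y ≤ row i := (hcase i).mp hmp
      have hrp : rpos i = p i - m := by rw [hrpos, if_pos hmp]
      have hsplit_take : Q.take (p i) = Q.take m ++ (Q.drop m).take (p i - m) := by
        rw [← List.take_add]; congr 1; omega
      refine ⟨by omega, ?_, ?_, ?_⟩
      · rw [hrp, hRdef, List.getD_append _ _ _ _ (by rw [hdroplen]; omega),
          skel_getD_drop, Nat.add_sub_cancel' hmp]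
        exact hp_true i
      · rw [hrp, hRdef, List.take_append_of_le_length (by rw [hdroplen]; omega)]
        have hc : (Q.take (p i)).count true = y + ((Q.drop m).take (p i - m)).count true := by
          rw [hsplit_take, List.count_append, hy]
        have hr := hrowq i
        rw [hρ0q, if_pos hyr]
        omega
      · rw [hrp, hRdef, List.take_append_of_le_length (by rw [hdroplen]; omega)]
        have hc : (Q.take (p i)).count false = x + ((Q.drop m).take (p i - m)).count false := by
          rw [hsplit_take, List.count_append, hx]
        rw [hncolq, if_pos hyr, hcol i, hc]
        push_cast
        ring
    · push_neg at hmp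
      have hyr : ¬ (y ≤ row i) := fun h => absurd ((hcase i).mpr h) (by omega)
      have hrp : rpos i = p i + ((a + b) - m) := by rw [hrpos, if_neg (by omega)]
      have hyb' : y + (Q.drop m).count true = b := by rw [hy, hcnt_split, hQt]
      have hxa' : x + (Q.drop m).count false = a := by rw [hx, hcnt_split, hQf]
      have htt : (Q.take m).take (p i) = Q.take (p i) := by
        rw [List.take_take]; congr 1; omega
      have htake : R.take (rpos i) = Q.drop m ++ Q.take (p i) := by
        rw [hrp, hRdef]
        have he : p i + ((a + b) - m) = (Q.drop m).length + p i := by rw [hdroplen]; omega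
        rw [he, List.take_length_add_append, htt]
      refine ⟨by omega, ?_, ?_, ?_⟩
      · rw [hrp, hRdef, List.getD_append_right _ _ _ _ (by rw [hdroplen]; omega), hdroplen]
        have he : p i + ((a + b) - m) - ((a + b) - m) = p i := by omega
        rw [he, skel_getD_take Q hmp]
        exact hp_true i
      · rw [htake, List.count_append]
        have hr := hrowq i
        rw [hρ0q, if_neg hyr]
        omega
      · rw [htake, List.count_append]
        rw [hncolq, if_neg hyr, hcol i]
        have h1 : ((Q.drop m).count false : ℤ) = (a : ℤ) - x := by
          have : ((x : ℤ)) + ((Q.drop m).count false : ℤ) = (a : ℤ) := by exact_mod_cast hxa'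
          linarith
        push_cast
        rw [h1]
        ring
  -- surjectivity of rpos onto norths of R
  have hsurjR : ∀ m', m' < a + b → R.getD m' false = true → ∃ i, rpos i = m' := by
    intro m' hm' htrue
    by_cases hsm : m' < (a + b) - m
    · have hq : Q.getD (m + m') false = true := by
        rw [hRdef, List.getD_append _ _ _ _ (by rw [hdroplen]; omega), skel_getD_drop] at htrue
        exact htrue
      obtain ⟨i, hi⟩ := hp_surj (m + m') (by omega) hq
      exact ⟨i, by rw [hrpos, hi, if_pos (by omega)]; omega⟩
    · push_neg at hsm
      have hq : Q.getD (m' - ((a + b) - m)) false = true := by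
        rw [hRdef, List.getD_append_right _ _ _ _ (by rw [hdroplen]; omega), hdroplen] at htrue
        rw [← skel_getD_take Q (show m' - ((a+b) - m) < m by omega)]
        exact htrue
      obtain ⟨i, hi⟩ := hp_surj (m' - ((a + b) - m)) (by omega) hq
      refine ⟨i, ?_⟩
      rw [hrpos, hi, if_neg (by omega)]
      omega
  -- counts after a north
  have hdropcnt : ∀ i : Fin b, (R.drop (rpos i + 1)).count true = b - 1 - ρ0 i := by
    intro i
    obtain ⟨h1, h2, h3, _⟩ := key i
    have hRsplit : R = R.take (rpos i + 1) ++ R.drop (rpos i + 1) :=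
      (List.take_append_drop _ R).symm
    have hRcount : R.count true = b := by
      rw [hRdef, List.count_append]
      have := hcnt_split true
      omega
    have hsucc : (R.take (rpos i + 1)).count true = ρ0 i + 1 := by
      rw [skel_count_take_succ R (rpos i) (by omega) true, h2, h3, if_pos rfl]
    have hχ : R.count true = (R.take (rpos i + 1)).count true + (R.drop (rpos i + 1)).count true := by
      conv_lhs => rw [hRsplit]
      rw [List.count_append]
    omega
  have hlvl : ∀ i : Fin b, lvlAt a b R (rpos i) = (a : ℤ) * (ρ0 i : ℤ) - b * ncol i := by
    intro i
    obtain ⟨_, _, h3, h4⟩ := key i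
    rw [lvlAt, h3, h4]
  rw [hrot]
  constructor
  · intro hR1 i hcond
    have := hR1 (rpos i) (by rw [hlenR]; exact (key i).1) (key i).2.1
      (by rw [hdropcnt i]; omega)
    rw [hlvl i] at this
    linarith
  · intro hcond m' hm'len htrue hcnt
    rw [hlenR] at hm'len
    obtain ⟨i, hi⟩ := hsurjR m' hm'len htrue
    rw [← hi, hlvl i]
    have hρk : b - 1 - k ≤ ρ0 i := by
      have h := hdropcnt i
      rw [hi] at h
      have := hrowb i
      have := hρ0q i
      have := hyb
      omega
    have := hcond i hρk
    linarith

/-- a configuration `D` with `0 ≤ D i < a` is `k`-skeletal iff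
the path `lpath D` is `k`-skeletal. -/
theorem kSkeletal_iff_path (a b k : ℕ) (ha : 0 < a) (hb : 0 < b)
    (hab : a.Coprime b) (hk : k < b) (D : Fin b → ℤ)
    (hD : ∀ i, 0 ≤ D i ∧ D i < (a : ℤ))
    (L : List (Option (Fin b))) (hL : IsLpath a b D L) :
    KSkeletal a b k D ↔ SkeletalPath a b k (unlabel L) := by
  classical
  obtain ⟨⟨hLnone, hLcount, _⟩, hLcol⟩ := hL
  set Q : List Bool := unlabel L with hQdef
  have hD0 : ∀ i, 0 ≤ D i := fun i => (hD i).1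
  have hDa : ∀ i, D i < (a : ℤ) := fun i => (hD i).2
  -- counts of Q
  have hQf : Q.count false = a := by
    rw [hQdef, unlabel, skel_ucount_false, hLnone]
  have hQt : Q.count true = b := by
    rw [hQdef, unlabel, skel_ucount_true]
    simp [hLcount]
  have hQlen : Q.length = a + b := by have := skel_count_tf Q; omega
  have hLlen : L.length = a + b := by
    have : Q.length = L.length := by rw [hQdef, unlabel, List.length_map]
    omega
  -- positions of labels
  have hex : ∀ i : Fin b, ∃ q, q < a + b ∧ L.getD q none = some i := by
    intro i
    have hmem : some i ∈ L := by
      have := hLcount i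
      exact List.count_pos_iff.mp (by omega)
    obtain ⟨n, hn⟩ := List.mem_iff_get.mp hmem
    refine ⟨n, by rw [← hLlen]; exact n.2, ?_⟩
    rw [← hn]
    simp [List.getD_eq_getElem?_getD, List.getElem?_eq_getElem n.2]
  choose p hp_lt hp_some using hex
  have huniq : ∀ (i : Fin b) (q : ℕ), q < a + b → L.getD q none = some i → q = p i := by
    intro i q hq hsome
    by_contra hne
    have hpi := hp_lt i
    have h2 : 2 ≤ L.count (some i) := by
      rcases Nat.lt_or_ge q (p i) with h | h
      · exact skel_two_le_count L none (some i) q (p i) h (by omega) hsome (hp_some i)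
      · exact skel_two_le_count L none (some i) (p i) q (by omega) (by omega) (hp_some i) hsome
    rw [hLcount i] at h2
    omega
  have hQgetL : ∀ q, q < a + b → Q.getD q false = (L.getD q none).isSome := by
    intro q hq
    rw [hQdef, unlabel]
    have hql : q < L.length := by omega
    simp [List.getD_eq_getElem?_getD, List.getElem?_eq_getElem hql,
      List.getElem?_map, List.getElem?_eq_getElem (l := L) hql]
  have hp_true : ∀ i, Q.getD (p i) false = true := by
    intro i
    rw [hQgetL (p i) (hp_lt i), hp_some i]
    rfl
  have hp_surj : ∀ q, q < a + b → Q.getD q false = true → ∃ i, p i = q := by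
    intro q hq htrue
    rw [hQgetL q hq] at htrue
    obtain ⟨i, hi⟩ := Option.isSome_iff_exists.mp htrue
    exact ⟨i, (huniq i q hq hi).symm⟩
  have hp_inj : Function.Injective p := by
    intro i j hij
    have h1 := hp_some i
    have h2 := hp_some j
    rw [hij, h2] at h1
    exact Option.some_injective _ h1.symm
  -- columns
  have hQtake : ∀ n, Q.take n = (L.take n).map Option.isSome := by
    intro n; rw [hQdef, unlabel, List.map_take]
  have hcolD : ∀ i, (D i) = ((Q.take (p i)).count false : ℤ) := by
    intro i
    rw [hQtake, skel_ucount_false]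
    exact (hLcol (p i) i (hp_some i)).symm
  -- rows
  obtain ⟨row, hrowq⟩ : ∃ f : Fin b → ℕ, ∀ i, f i = (Q.take (p i)).count true :=
    ⟨_, fun _ => rfl⟩
  have hrow_lt : ∀ i, row i < b := by
    intro i
    have h1 : (Q.take (p i + 1)).count true = row i + 1 := by
      rw [skel_count_take_succ Q (p i) (by rw [hQlen]; exact hp_lt i) true, hp_true i,
        if_pos rfl, hrowq]
    have h2 : (Q.take (p i + 1)).count true ≤ b := by
      rw [← hQt]
      conv_rhs => rw [← List.take_length (l := Q)]
      exact skel_count_take_mono Q (by rw [hQlen]; exact hp_lt i) true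
    omega
  have hp_strict : ∀ i j, p i < p j → row i < row j := by
    intro i j hij
    have h1 : (Q.take (p i + 1)).count true = row i + 1 := by
      rw [skel_count_take_succ Q (p i) (by rw [hQlen]; exact hp_lt i) true, hp_true i,
        if_pos rfl, hrowq]
    have h2 : (Q.take (p i + 1)).count true ≤ (Q.take (p j)).count true :=
      skel_count_take_mono Q (by omega) true
    rw [hrowq j]
    omega
  have hrow_le : ∀ i j, row i ≤ row j → p i ≤ p j := by
    intro i j hij
    by_contra hcon
    have := hp_strict j i (by omega)
    omega
  have hcol_mono : ∀ i j, row i ≤ row j → D i ≤ D j := by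
    intro i j hij
    rw [hcolD i, hcolD j]
    have := hrow_le i j hij
    exact_mod_cast skel_count_take_mono Q this false
  have hrow_inj : ∀ i j : Fin b, row i = row j → i = j := by
    intro i j hij
    rcases Nat.lt_trichotomy (p i) (p j) with h | h | h
    · have := hp_strict i j h; omega
    · exact hp_inj h
    · have := hp_strict j i h; omega
  have hrow_surj : ∀ ν, ν < b → ∃ i, row i = ν := by
    intro ν hν
    have hbij : Function.Bijective (fun i : Fin b => (⟨row i, hrow_lt i⟩ : Fin b)) := by
      rw [Fintype.bijective_iff_injective_and_card]
      exact ⟨fun i j hij => hrow_inj i j (by simpa using hij), rfl⟩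
    obtain ⟨i, hi⟩ := hbij.2 ⟨ν, hν⟩
    exact ⟨i, by simpa using congrArg Fin.val hi⟩
  have hplen : ∀ i, (p i : ℤ) = row i + D i := by
    intro i
    have hpi := hp_lt i
    have h2 : (Q.take (p i)).length = p i := by rw [List.length_take, hQlen]; omega
    have h1 := skel_count_tf (Q.take (p i))
    rw [h2] at h1
    rw [hcolD i, hrowq i]
    push_cast
    omega
  -- stability conversion
  have hKconv : ∀ β : Fin b → ℤ, KStable a b k β ↔ ((∀ i, 0 ≤ β i) ∧ ∀ s, 1 ≤ s → s ≤ k + 1 →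
      (Finset.univ.filter fun i => (a : ℤ) * ((b - s : ℕ) : ℤ) < b * β i).card ≤ s - 1) := by
    intro β
    have : KStable a b k β ↔ KStable' a b k β := Iff.rfl
    rw [this]
    exact skel_stable_iff a b k hb β
  -- Part 1 : KStable D ↔ R1 Q
  have hdict0 : R1 a b k (Q.rotate 0) ↔ ∀ i : Fin b,
      b - 1 - k ≤ row i → (b : ℤ) * D i ≤ (a : ℤ) * (row i : ℤ) := by
    have := skel_dict a b k Q hQt hQf p D hp_lt hp_true hp_surj hcolD row row D
      0 (by omega) 0 0 (by simp) (by simp) hrowq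
      (fun i => by simp) (fun i => by simp)
    exact this
  rw [List.rotate_zero] at hdict0
  have hKS : KStable a b k D ↔ R1 a b k Q := by
    rw [hKconv, hdict0]
    constructor
    · rintro ⟨_, hcount⟩ i hi
      have := skel_core2 a k D row hb hrow_lt (fun i j h => hrow_inj i j h) hrow_surj
        hcol_mono hcount i hi
      linarith
    · intro h
      refine ⟨hD0, ?_⟩
      apply skel_core1 a k D row hb hrow_lt (fun i j h => hrow_inj i j h) hrow_surj hcol_mono
      intro i hi
      have := h i hi
      linarith
  constructor
  · -- KSkeletal → SkeletalPath
    rintro ⟨hstab, hbor⟩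
    refine ⟨hKS.mp hstab, ?_⟩
    intro m hmlen hpos hR1rot
    rw [hQlen] at hmlen
    set y : ℕ := (Q.take m).count true with hydef
    set x : ℕ := (Q.take m).count false with hxdef
    have hyb : y ≤ b := by
      rw [hydef, ← hQt]
      conv_rhs => rw [← List.take_length (l := Q)]
      exact skel_count_take_mono Q (by omega) true
    have hxa : x ≤ a := by
      rw [hxdef, ← hQf]
      conv_rhs => rw [← List.take_length (l := Q)]
      exact skel_count_take_mono Q (by omega) false
    have hpos' : (0:ℤ) < (a:ℤ) * y - b * x := by
      rw [hydef, hxdef]; exact hpos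
    have hy1 : 1 ≤ y := by
      by_contra hcy
      push_neg at hcy
      have hy0 : y = 0 := by omega
      rw [hy0] at hpos'
      have : (0:ℤ) ≤ (b:ℤ) * x := by positivity
      push_cast at hpos'
      linarith
    have hbxZ : ((b * x : ℕ) : ℤ) < ((a * y : ℕ) : ℤ) := by push_cast; linarith
    have hbx : b * x < a * y := by exact_mod_cast hbxZ
    have hxcy : x ≤ (y * a - 1) / b := by
      rw [Nat.le_div_iff_mul_le hb, mul_comm x b, mul_comm y a]
      omega
    have hpm_row : ∀ i : Fin b, p i < m → row i < y := by
      intro i hpi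
      have h1 : (Q.take (p i + 1)).count true = row i + 1 := by
        rw [skel_count_take_succ Q (p i) (by rw [hQlen]; exact hp_lt i) true, hp_true i,
          if_pos rfl, hrowq]
      have h2 : (Q.take (p i + 1)).count true ≤ y := by
        rw [hydef]; exact skel_count_take_mono Q (by omega) true
      omega
    have hrow_x : ∀ i : Fin b, y ≤ row i → (x:ℤ) ≤ D i := by
      intro i h
      have hpm : m ≤ p i := by
        by_contra hc
        push_neg at hc
        have := hpm_row i hc
        omega
      rw [hcolD i, hxdef]
      exact_mod_cast skel_count_take_mono Q hpm false
    -- minimal ledge height z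
    have hPex : ∃ z', y ≤ z' ∧ (b ≤ z' ∨ ∀ j : Fin b, row j = z' →
        ((((z' * a - 1) / b : ℕ)) : ℤ) ≤ D j) := ⟨b, hyb, Or.inl le_rfl⟩
    obtain ⟨z, ⟨hzy, hPz2⟩, hzmin⟩ : ∃ z, (y ≤ z ∧ (b ≤ z ∨ ∀ j : Fin b, row j = z →
        ((((z * a - 1) / b : ℕ)) : ℤ) ≤ D j)) ∧ ∀ w, w < z → ¬(y ≤ w ∧ (b ≤ w ∨ ∀ j : Fin b,
        row j = w → ((((w * a - 1) / b : ℕ)) : ℤ) ≤ D j)) :=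
      ⟨Nat.find hPex, Nat.find_spec hPex, fun w hw => Nat.find_min hPex hw⟩
    have hzb : z ≤ b := by
      by_contra hcon
      exact (hzmin b (by omega)) ⟨hyb, Or.inl le_rfl⟩
    have hz1 : 1 ≤ z := by omega
    obtain ⟨hcza, hbtz, htaz, hlz1, hlz2⟩ := skel_bor a b z ha hb hab hz1 hzb
    -- the ledge property
    have hledge : ∀ i : Fin b, y ≤ row i → row i < z →
        (D i) ≤ ((((row i) * a - 1) / b : ℕ) : ℤ) - 1 := by
      intro i h1 h2
      have hnP := hzmin (row i) h2
      push_neg at hnP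
      obtain ⟨_, j, hjrow, hjlt⟩ := hnP h1
      have hij : i = j := hrow_inj i j hjrow.symm
      rw [← hij] at hjlt
      omega
    -- ℓ ≥ ℓ*(z)
    have hll : ((z:ℤ) * a - b * (((z * a - 1) / b : ℕ) : ℤ)) ≤ (a:ℤ) * y - b * x := by
      rcases eq_or_lt_of_le hzy with he | hlt
      · have hx' : (x:ℤ) ≤ (((y * a - 1) / b : ℕ) : ℤ) := by exact_mod_cast hxcy
        rw [← he]
        have hb0 : (0:ℤ) ≤ (b:ℤ) := by positivity
        linarith only [mul_le_mul_of_nonneg_left hx' hb0]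
      · have hnP := hzmin y hlt
        push_neg at hnP
        obtain ⟨hyb', j, hjrow, hjlt⟩ := hnP (le_refl y)
        obtain ⟨hcya, _, _, hly1, hly2⟩ := skel_bor a b y ha hb hab hy1 hyb
        have hxj : (x:ℤ) ≤ D j := hrow_x j (by omega)
        have hb0 : (0:ℤ) ≤ (b:ℤ) := by positivity
        have hmul := mul_le_mul_of_nonneg_left
          (show (x:ℤ) ≤ (((y*a-1)/b : ℕ):ℤ) - 1 by omega) hb0
        linarith only [hly1, hlz2, hmul]
    -- the borrow set
    set T := Finset.univ.filter (fun i : Fin b => row i < z) with hTdef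
    have hmemT : ∀ i : Fin b, i ∈ T ↔ row i < z := by
      intro i
      rw [hTdef, Finset.mem_filter]
      simp
    have hTcard : T.card = z := by
      have hcb : T.card = (Finset.range z).card := by
        apply Finset.card_bij (fun i _ => row i)
        · intro i hi
          rw [hTdef, Finset.mem_filter] at hi
          exact Finset.mem_range.mpr hi.2
        · intro i _ j _ h
          exact hrow_inj i j h
        · intro ν hν
          rw [Finset.mem_range] at hν
          obtain ⟨i, hi⟩ := hrow_surj ν (by omega)
          refine ⟨i, ?_, hi⟩
          rw [hTdef]
          exact Finset.mem_filter.mpr ⟨Finset.mem_univ _, by omega⟩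
      rw [hcb, Finset.card_range]
    have hTne : T.Nonempty := by
      obtain ⟨i, hi⟩ := hrow_surj 0 hb
      exact ⟨i, Finset.mem_filter.mpr ⟨Finset.mem_univ _, by omega⟩⟩
    have hβeq : ∀ i, cborrow a b T D i =
        D i - (((z * a - 1) / b : ℕ) : ℤ) + (if z ≤ row i then 0 else (a:ℤ)) := by
      intro i
      simp only [cborrow, hTcard]
      by_cases hiT : i ∈ T
      · rw [if_pos hiT, if_neg (by rw [hmemT] at hiT; omega)]
        rw [hbtz]
        have hz' : (((a - 1 - ((z*a-1)/b) : ℕ)) : ℤ) = (a:ℤ) - 1 - (((z*a-1)/b : ℕ) : ℤ) := by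
          omega
        rw [hz']
        ring
      · rw [if_neg hiT, if_pos (by rw [hmemT] at hiT; omega)]
        have hzb' : z < b := by
          have := hrow_lt i
          rw [hmemT] at hiT
          omega
        rw [htaz hzb']
        ring
    have hleg : ∀ i, 0 ≤ cborrow a b T D i := by
      intro i
      rw [hβeq i]
      by_cases hzr : z ≤ row i
      · rw [if_pos hzr]
        have hzb' : z < b := by have := hrow_lt i; omega
        obtain ⟨j, hj⟩ := hrow_surj z hzb'
        rcases hPz2 with h | h
        · exact absurd h (by omega)
        · have h1 := h j hj
          have h2 := hcol_mono j i (by omega)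
          linarith only [h1, h2]
      · rw [if_neg hzr]
        have h1 := hD0 i
        have h2 : ((((z*a-1)/b : ℕ)) : ℤ) < (a:ℤ) := by exact_mod_cast hcza
        linarith only [h1, h2]
    -- stability of the borrowed configuration
    have hstabβ : KStable a b k (cborrow a b T D) := by
      rw [hKconv]
      refine ⟨hleg, ?_⟩
      obtain ⟨ρ0z, hρ0z⟩ : ∃ f : Fin b → ℕ,
          ∀ i, f i = if z ≤ row i then row i - z else row i + (b - z) := ⟨_, fun _ => rfl⟩
      obtain ⟨hρlt, hρinj, hρsurj⟩ := skel_rho b z hzb row hrow_lt hrow_inj hrow_surj ρ0z hρ0z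
      have hmonoβ := skel_rho_mono a b z ((((z*a-1)/b : ℕ)) : ℤ) row D (cborrow a b T D)
        ρ0z hρ0z hβeq hcol_mono hD0 hDa hrow_lt
      apply skel_core1 a k (cborrow a b T D) ρ0z hb hρlt hρinj hρsurj hmonoβ
      -- remaining : the level bounds H0
      obtain ⟨ρ0y, hρ0y⟩ : ∃ f : Fin b → ℕ,
          ∀ i, f i = if y ≤ row i then row i - y else row i + (b - y) := ⟨_, fun _ => rfl⟩
      obtain ⟨ncoly, hncoly⟩ : ∃ f : Fin b → ℤ,
          ∀ i, f i = D i - (x:ℤ) + (if y ≤ row i then 0 else (a:ℤ)) := ⟨_, fun _ => rfl⟩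
      have hdictm := skel_dict a b k Q hQt hQf p D hp_lt hp_true hp_surj hcolD row
        ρ0y ncoly m (by omega) y x hydef hxdef hrowq hρ0y hncoly
      have Hold := hdictm.mp hR1rot
      have Hold' : ∀ j : Fin b, b - 1 - k ≤ ρ0y j →
          0 ≤ ((a:ℤ) * (row j : ℤ) - b * D j) - ((a:ℤ) * y - b * x) := by
        intro j hj
        have h3 := Hold j hj
        rw [hρ0y j, hncoly j] at h3
        by_cases hyr : y ≤ row j
        · rw [if_pos hyr, if_pos hyr] at h3
          have hcast : ((row j - y : ℕ) : ℤ) = (row j : ℤ) - y := by omega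
          rw [hcast] at h3
          linarith only [h3]
        · rw [if_neg hyr, if_neg hyr] at h3
          have hcast : ((row j + (b - y) : ℕ) : ℤ) = (row j : ℤ) + b - y := by omega
          rw [hcast] at h3
          linarith only [h3]
      intro i hρi
      have hident : (a:ℤ) * (ρ0z i : ℤ) - b * (cborrow a b T D i) =
          ((a:ℤ) * (row i : ℤ) - b * D i) - ((z:ℤ)*a - b*((((z*a-1)/b : ℕ)) : ℤ)) := by
        rw [hρ0z i, hβeq i]
        by_cases hzr : z ≤ row i
        · rw [if_pos hzr, if_pos hzr]
          have hcast : ((row i - z : ℕ) : ℤ) = (row i : ℤ) - z := by omega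
          rw [hcast]; ring
        · rw [if_neg hzr, if_neg hzr]
          have hcast : ((row i + (b - z) : ℕ) : ℤ) = (row i : ℤ) + b - z := by omega
          rw [hcast]; ring
      rw [hident]
      rcases le_or_gt z (row i) with hc1 | hc1
      · have hyi : y ≤ row i := by omega
        have hρy : b - 1 - k ≤ ρ0y i := by
          rw [hρ0y i, if_pos hyi]
          rw [hρ0z i, if_pos hc1] at hρi
          omega
        have h9 := Hold' i hρy
        linarith only [h9, hll]
      · rcases lt_or_ge (row i) y with hc2 | hc2
        · have hρy : b - 1 - k ≤ ρ0y i := by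
            rw [hρ0y i, if_neg (by omega)]
            rw [hρ0z i, if_neg (by omega)] at hρi
            omega
          have h9 := Hold' i hρy
          linarith only [h9, hll]
        · have hld := hledge i hc2 hc1
          have hr1 : 1 ≤ row i := by omega
          have hrb : row i ≤ b := by have := hrow_lt i; omega
          obtain ⟨hcra, _, _, hlr1, hlr2⟩ := skel_bor a b (row i) ha hb hab hr1 hrb
          have hb0 : (0:ℤ) ≤ (b:ℤ) := by positivity
          have hmul := mul_le_mul_of_nonneg_left hld hb0
          linarith only [hlr1, hlr2, hlz1, hlz2, hmul]
    exact hbor T hTne hleg hstabβ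

  · -- SkeletalPath → KSkeletal
    rintro ⟨hR1, hR2⟩
    refine ⟨hKS.mpr hR1, ?_⟩
    intro T hTne hTleg hTstab
    have ht1 : 1 ≤ T.card := Finset.card_pos.mpr hTne
    have ht2 : T.card ≤ b := by
      have := Finset.card_le_univ T
      simpa using this
    obtain ⟨hcta, hbtt, htat, hlt1, hlt2⟩ := skel_bor a b T.card ha hb hab ht1 ht2
    rw [hKconv] at hTstab
    obtain ⟨hβ0, hcount⟩ := hTstab
    have hβa : ∀ i, cborrow a b T D i < (a:ℤ) := by
      intro i
      have h1 := hcount 1 le_rfl (by omega)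
      have h2 : (Finset.univ.filter fun j =>
          (a:ℤ) * ((b - 1 : ℕ) : ℤ) < b * cborrow a b T D j).card = 0 := by omega
      have h3 := Finset.card_eq_zero.mp h2
      have h4 : i ∉ (Finset.univ.filter fun j =>
          (a:ℤ) * ((b - 1 : ℕ) : ℤ) < b * cborrow a b T D j) := by
        rw [h3]; exact Finset.notMem_empty i
      rw [Finset.mem_filter] at h4
      push_neg at h4
      have h5 := h4 (Finset.mem_univ i)
      have h6 : ((b - 1 : ℕ) : ℤ) = (b:ℤ) - 1 := by omega
      rw [h6] at h5
      by_contra hcon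
      push_neg at hcon
      have h7 : (b:ℤ) * a ≤ b * cborrow a b T D i :=
        mul_le_mul_of_nonneg_left hcon (by positivity)
      have ha' : (0:ℤ) < a := by exact_mod_cast ha
      linarith only [h5, h7, ha']
    have hmemT : ∀ i, i ∈ T ↔ D i < (((T.card * a - 1) / b : ℕ) : ℤ) := by
      intro i
      constructor
      · intro hiT
        have h1 : cborrow a b T D i = D i + 1 + (((b - T.card) * a / b : ℕ) : ℤ) := by
          simp only [cborrow, if_pos hiT]
        have h2 := hβa i
        rw [h1, hbtt] at h2
        have h3 : ((a - 1 - ((T.card*a-1)/b) : ℕ) : ℤ)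
            = (a:ℤ) - 1 - (((T.card*a-1)/b : ℕ) : ℤ) := by omega
        rw [h3] at h2
        linarith only [h2]
      · intro hDi
        by_contra hiT
        have h1 : cborrow a b T D i = D i - ((T.card * a / b : ℕ) : ℤ) := by
          simp only [cborrow, if_neg hiT]
        have htb : T.card < b := by
          rcases eq_or_lt_of_le ht2 with he | hl
          · exfalso
            have hTu : T = Finset.univ := Finset.eq_univ_of_card T (by rw [he]; simp)
            rw [hTu] at hiT
            exact hiT (Finset.mem_univ i)
          · exact hl
        rw [htat htb] at h1
        have h2 := hβ0 i
        rw [h1] at h2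
        linarith only [h2, hDi]
    have hS1card : (Finset.univ.filter fun i : Fin b => row i < T.card).card = T.card := by
      have hcb : (Finset.univ.filter fun i : Fin b => row i < T.card).card
          = (Finset.range T.card).card := by
        apply Finset.card_bij (fun i _ => row i)
        · intro i hi
          rw [Finset.mem_filter] at hi
          exact Finset.mem_range.mpr hi.2
        · intro i _ j _ h
          exact hrow_inj i j h
        · intro ν hν
          rw [Finset.mem_range] at hν
          obtain ⟨i, hi⟩ := hrow_surj ν (by omega)
          exact ⟨i, Finset.mem_filter.mpr ⟨Finset.mem_univ _, by omega⟩, hi⟩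
      rw [hcb, Finset.card_range]
    have hsets : (Finset.univ.filter fun i : Fin b => row i < T.card) = T := by
      by_cases hss : (Finset.univ.filter fun i : Fin b => row i < T.card) ⊆ T
      · exact Finset.eq_of_subset_of_card_le hss (le_of_eq hS1card.symm)
      · exfalso
        obtain ⟨j, hj1, hj2⟩ := Finset.not_subset.mp hss
        have hDj : ¬ (D j < (((T.card * a - 1) / b : ℕ) : ℤ)) := fun hh => hj2 ((hmemT j).mpr hh)
        have hts : ¬ T ⊆ (Finset.univ.filter fun i : Fin b => row i < T.card) := by
          intro hts
          have heq2 := Finset.eq_of_subset_of_card_le hts (le_of_eq hS1card)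
          apply hss
          rw [← heq2]
        obtain ⟨i, hi1, hi2⟩ := Finset.not_subset.mp hts
        have hri : ¬ (row i < T.card) := by
          intro hh
          exact hi2 (Finset.mem_filter.mpr ⟨Finset.mem_univ _, hh⟩)
        have hrj : row j < T.card := (Finset.mem_filter.mp hj1).2
        have hmn := hcol_mono j i (by omega)
        have hDi := (hmemT i).mp hi1
        omega
    have hrowT : ∀ i, row i < T.card ↔ D i < (((T.card * a - 1) / b : ℕ) : ℤ) := by
      intro i
      constructor
      · intro h
        have : i ∈ T := by
          rw [← hsets]
          exact Finset.mem_filter.mpr ⟨Finset.mem_univ _, h⟩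
        exact (hmemT i).mp this
      · intro h
        have hmem : i ∈ T := (hmemT i).mpr h
        rw [← hsets] at hmem
        exact (Finset.mem_filter.mp hmem).2
    have hmle : T.card + (T.card*a-1)/b ≤ a + b := by omega
    have hym : (Q.take (T.card + (T.card*a-1)/b)).count true = T.card := by
      rw [skel_count_pos a b Q hQlen p hp_lt hp_true hp_surj hp_inj _ hmle]
      have heqf : (Finset.univ.filter fun i : Fin b => p i < T.card + (T.card*a-1)/b)
          = (Finset.univ.filter fun i : Fin b => row i < T.card) := by
        ext i
        simp only [Finset.mem_filter, Finset.mem_univ, true_and]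
        constructor
        · intro hpi
          by_contra hcon
          push_neg at hcon
          have hDge : ¬ (D i < (((T.card*a-1)/b : ℕ) : ℤ)) := fun hh => by
            have := (hrowT i).mpr hh
            omega
          have hpl := hplen i
          omega
        · intro hri
          have hDi := (hrowT i).mp hri
          have hpl := hplen i
          omega
      rw [heqf, hS1card]
    have hxm : (Q.take (T.card + (T.card*a-1)/b)).count false = (T.card*a-1)/b := by
      have h2 : (Q.take (T.card + (T.card*a-1)/b)).length = T.card + (T.card*a-1)/b := by
        rw [List.length_take, hQlen]
        omega
      have h1 := skel_count_tf (Q.take (T.card + (T.card*a-1)/b))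
      rw [h2, hym] at h1
      omega
    have hlvlm : 0 < lvlAt a b Q (T.card + (T.card*a-1)/b) := by
      rw [lvlAt, hym, hxm]
      linarith only [hlt1]
    apply hR2 (T.card + (T.card*a-1)/b) (by rw [hQlen]; omega) hlvlm
    obtain ⟨ρ0t, hρ0t⟩ : ∃ f : Fin b → ℕ,
        ∀ i, f i = if T.card ≤ row i then row i - T.card else row i + (b - T.card) :=
      ⟨_, fun _ => rfl⟩
    obtain ⟨ncolt, hncolt⟩ : ∃ f : Fin b → ℤ,
        ∀ i, f i = D i - (((T.card*a-1)/b : ℕ) : ℤ) + (if T.card ≤ row i then 0 else (a:ℤ)) :=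
      ⟨_, fun _ => rfl⟩
    rw [skel_dict a b k Q hQt hQf p D hp_lt hp_true hp_surj hcolD row ρ0t ncolt
      (T.card + (T.card*a-1)/b) (by omega) T.card ((T.card*a-1)/b) hym.symm hxm.symm
      hrowq hρ0t hncolt]
    have hncolβ : ∀ i, ncolt i = cborrow a b T D i := by
      intro i
      rw [hncolt i]
      by_cases hiT : i ∈ T
      · have hri : row i < T.card := (hrowT i).mpr ((hmemT i).mp hiT)
        rw [if_neg (by omega)]
        simp only [cborrow, if_pos hiT]
        rw [hbtt]
        have h3 : ((a - 1 - ((T.card*a-1)/b) : ℕ) : ℤ)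
            = (a:ℤ) - 1 - (((T.card*a-1)/b : ℕ) : ℤ) := by omega
        rw [h3]
        ring
      · have hri : ¬ row i < T.card := fun hh => hiT ((hmemT i).mpr ((hrowT i).mp hh))
        rw [if_pos (by omega)]
        simp only [cborrow, if_neg hiT]
        have htb : T.card < b := by
          have := hrow_lt i
          omega
        rw [htat htb]
        ring
    obtain ⟨hρlt, hρinj, hρsurj⟩ := skel_rho b T.card ht2 row hrow_lt hrow_inj hrow_surj ρ0t hρ0t
    have hmonoβ : ∀ i j, ρ0t i ≤ ρ0t j → ncolt i ≤ ncolt j :=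
      skel_rho_mono a b T.card ((((T.card*a-1)/b : ℕ)) : ℤ) row D ncolt ρ0t hρ0t hncolt
        hcol_mono hD0 hDa hrow_lt
    have hcount' : ∀ s, 1 ≤ s → s ≤ k + 1 →
        (Finset.univ.filter fun i => (a:ℤ)*((b - s : ℕ):ℤ) < b * ncolt i).card ≤ s - 1 := by
      intro s hs1 hs2
      have heq : (Finset.univ.filter fun i => (a:ℤ)*((b - s:ℕ):ℤ) < b * ncolt i)
          = (Finset.univ.filter fun i => (a:ℤ)*((b - s:ℕ):ℤ) < b * cborrow a b T D i) := by
        apply Finset.filter_congr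
        intro i _
        rw [hncolβ i]
      rw [heq]
      exact hcount s hs1 hs2
    intro i hρ
    have hfin := skel_core2 a k ncolt ρ0t hb hρlt hρinj hρsurj hmonoβ hcount' i hρ
    linarith only [hfin]
end

section
/- Let a, b be coprime positive integers with b > 1 and set e = 1 + ⌊a/b⌋. The map sending a chip configuration D to the configuration D' defined by D'(i) = a − e − D(i) for all i ∈ {1,…,b} is a bijection from the set of superstable ((b−1)-skeletal) chip configurations onto the set of 0-skeletal chip configurations. -/
lemma superadd' (a b x y : ℕ) (hb : 0 < b) : x*a/b + y*a/b ≤ (x+y)*a/b := by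
  rw [Nat.le_div_iff_mul_le hb, add_mul]
  calc (x*a/b)*b + (y*a/b)*b ≤ x*a + y*a :=
        add_le_add (Nat.div_mul_le_self _ _) (Nat.div_mul_le_self _ _)
    _ = (x+y)*a := (add_mul x y a).symm

lemma fact1 (a b : ℕ) (ha : 0 < a) (hb : 1 < b) (hab : a.Coprime b) :
    (b-1)*a/b + a/b + 1 = a := by
  have hbpos : 0 < b := by omega
  have hr : a % b ≠ 0 := by
    intro h
    have hd : b ∣ a := Nat.dvd_of_mod_eq_zero h
    have hg : b ∣ Nat.gcd a b := Nat.dvd_gcd hd dvd_rfl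
    rw [hab] at hg
    have := Nat.le_of_dvd one_pos hg
    omega
  have h2 := Nat.div_add_mod a b
  have h3 : a % b < b := Nat.mod_lt _ hbpos
  -- pass to the integers
  have e1 : (((b-1)*a/b : ℕ) : ℤ) = (((b:ℤ)-1)*a) / (b:ℤ) := by
    rw [Int.natCast_div]
    congr 1
    push_cast [Nat.cast_sub (by omega : 1 ≤ b)]
    ring
  have e2 : ((a/b : ℕ) : ℤ) = (a:ℤ) / (b:ℤ) := Int.natCast_div a b
  have hq := Int.mul_ediv_add_emod (a:ℤ) (b:ℤ)
  have hrr : (a:ℤ) % (b:ℤ) = ((a % b : ℕ) : ℤ) := (Int.natCast_mod a b).symm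
  have hr1 : (1:ℤ) ≤ (a:ℤ) % (b:ℤ) := by
    rw [hrr]; exact_mod_cast Nat.one_le_iff_ne_zero.mpr hr
  have hr2 : (a:ℤ) % (b:ℤ) < (b:ℤ) := by
    rw [hrr]; exact_mod_cast h3
  have key : (((b:ℤ)-1)*a) / (b:ℤ) = (a:ℤ) - (a:ℤ)/(b:ℤ) - 1 := by
    have hsplit : ((b:ℤ)-1)*a
        = ((b:ℤ) - (a:ℤ) % (b:ℤ)) + ((a:ℤ) - (a:ℤ)/(b:ℤ) - 1) * (b:ℤ) := by
      linear_combination hq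
    rw [hsplit, Int.add_mul_ediv_right _ _ (by positivity : (b:ℤ) ≠ 0),
      Int.ediv_eq_zero_of_lt (by omega) (by omega)]
    ring
  have final : (((b-1)*a/b : ℕ) : ℤ) + ((a/b : ℕ) : ℤ) + 1 = (a:ℤ) := by
    rw [e1, e2, key]
    ring
  exact_mod_cast final

lemma cfire_illegal (a b : ℕ) (S : Finset (Fin b)) (D : Fin b → ℤ)
    (hD : ∀ i, 0 ≤ D i) :
    (¬ ∀ i, 0 ≤ cfire a b S D i) ↔ ∃ i ∈ S, D i ≤ ((b - S.card)*a/b : ℕ) := by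
  constructor
  · intro h
    push_neg at h
    obtain ⟨i, hi⟩ := h
    by_cases hiS : i ∈ S
    · refine ⟨i, hiS, ?_⟩
      simp only [cfire, if_pos hiS] at hi
      omega
    · simp only [cfire, if_neg hiS] at hi
      have h1 := hD i
      have h2 : (0:ℤ) ≤ ((S.card * a / b : ℕ) : ℤ) := Int.natCast_nonneg _
      omega
  · rintro ⟨i, hiS, hle⟩ h
    have := h i
    simp only [cfire, if_pos hiS] at this
    omega

lemma stable0_iff (a b : ℕ) (D : Fin b → ℤ) :
    KStable a b 0 D ↔ ∀ i, 0 ≤ D i ∧ D i ≤ ((b-1)*a/b : ℕ) := by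
  constructor
  · rintro ⟨h0, h1⟩ i
    refine ⟨h0 i, ?_⟩
    have h := h1 {i} (Finset.singleton_nonempty i) (by simp)
    rw [cfire_illegal a b _ _ h0] at h
    obtain ⟨j, hj, hle⟩ := h
    simp only [Finset.mem_singleton] at hj
    subst hj
    simpa using hle
  · intro h
    refine ⟨fun i => (h i).1, fun S hS hcard => ?_⟩
    rw [cfire_illegal a b _ _ (fun i => (h i).1)]
    obtain ⟨i, hi⟩ := hS
    have hc : S.card = 1 := by
      have := Finset.card_pos.mpr ⟨i, hi⟩
      omega
    exact ⟨i, hi, by rw [hc]; exact (h i).2⟩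

lemma superstable_iff (a b : ℕ) (hb : 0 < b) (D : Fin b → ℤ) :
    KStable a b (b-1) D ↔ (∀ i, 0 ≤ D i) ∧
      ∀ S : Finset (Fin b), S.Nonempty → ∃ i ∈ S, D i ≤ ((b - S.card)*a/b : ℕ) := by
  constructor
  · rintro ⟨h0, h1⟩
    refine ⟨h0, fun S hS => ?_⟩
    have hcard : S.card ≤ b - 1 + 1 := by
      have := Finset.card_le_univ S
      simp [Fintype.card_fin] at this
      omega
    have := h1 S hS hcard
    rwa [cfire_illegal a b _ _ h0] at this
  · rintro ⟨h0, h1⟩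
    exact ⟨h0, fun S hS _ => (cfire_illegal a b _ _ h0).mpr (h1 S hS)⟩

lemma main_iff (a b : ℕ) (ha : 0 < a) (hb : 1 < b) (hab : a.Coprime b)
    (D : Fin b → ℤ) :
    KStable a b (b-1) D ↔
      KSkeletal a b 0 (fun i => (((b-1)*a/b : ℕ) : ℤ) - D i) := by
  have hbpos : 0 < b := by omega
  constructor
  · intro H
    obtain ⟨h0, h1⟩ := (superstable_iff a b hbpos D).mp H
    constructor
    · rw [stable0_iff]
      intro i
      obtain ⟨j, hj, hle⟩ := h1 {i} (Finset.singleton_nonempty i)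
      simp only [Finset.mem_singleton] at hj
      subst hj
      simp only [Finset.card_singleton] at hle
      have := h0 j
      refine ⟨?_, ?_⟩ <;> beta_reduce <;> omega
    · intro T hT hleg hstab
      rw [stable0_iff] at hstab
      obtain ⟨i, hiT, hile⟩ := h1 T hT
      have h2 := (hstab i).2
      simp only [cborrow, if_pos hiT] at h2
      beta_reduce at h2
      omega
  · rintro ⟨Hst, Hsk⟩
    rw [stable0_iff] at Hst
    beta_reduce at Hst
    have hD0 : ∀ i, 0 ≤ D i := fun i => by have := (Hst i).2; omega
    have hDc : ∀ i, D i ≤ (((b-1)*a/b : ℕ):ℤ) := fun i => by have := (Hst i).1; omega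
    rw [superstable_iff a b hbpos D]
    refine ⟨hD0, ?_⟩
    by_contra hcon
    push_neg at hcon
    obtain ⟨S0, hS0ne, hS0⟩ := hcon
    classical
    set P : ℕ → Prop := fun σ => ∃ T : Finset (Fin b), T.Nonempty ∧ T.card = σ ∧
      ∀ i ∈ T, (((b-σ)*a/b : ℕ):ℤ) < D i with hPdef
    have hP0 : P S0.card := ⟨S0, hS0ne, rfl, hS0⟩
    have hS0b : S0.card ≤ b := by
      have := Finset.card_le_univ S0
      simpa [Fintype.card_fin] using this
    have hPmax : P (Nat.findGreatest P b) := Nat.findGreatest_spec hS0b hP0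
    set σ := Nat.findGreatest P b with hσdef
    obtain ⟨T, hTne, hTcard, hTval⟩ := hPmax
    have hσb : σ ≤ b := by
      rw [← hTcard]
      have := Finset.card_le_univ T
      simpa [Fintype.card_fin] using this
    have hTltb : ∀ j : Fin b, j ∉ T → σ < b := by
      intro j hj
      by_contra h
      have hσe : σ = b := by omega
      have : T = Finset.univ :=
        Finset.eq_univ_of_card T (by rw [hTcard, hσe]; simp)
      exact hj (this ▸ Finset.mem_univ j)
    have hout : ∀ j, j ∉ T → D j ≤ (((b-σ-1)*a/b : ℕ):ℤ) := by
      intro j hj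
      by_contra hDj
      push_neg at hDj
      have hσlt : σ < b := hTltb j hj
      have hP1 : P (σ+1) := by
        refine ⟨insert j T, ⟨j, Finset.mem_insert_self j T⟩, ?_, ?_⟩
        · rw [Finset.card_insert_of_notMem hj, hTcard]
        · intro i hi
          rcases Finset.mem_insert.mp hi with h | h
          · subst h
            have he : b - (σ+1) = b - σ - 1 := by omega
            rw [he]
            exact hDj
          · have hmono : ((b - (σ+1))*a/b : ℕ) ≤ ((b-σ)*a/b : ℕ) :=
              Nat.div_le_div_right (Nat.mul_le_mul_right a (by omega))
            have := hTval i h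
            omega
      exact absurd hP1 (Nat.findGreatest_is_greatest
        (show σ < σ + 1 by omega) (show σ + 1 ≤ b by omega))
    have hsupσ : ∀ j : Fin b, j ∉ T →
        ((b-σ-1)*a/b : ℕ) + (σ*a/b : ℕ) ≤ ((b-1)*a/b : ℕ) := by
      intro j hj
      have hσlt : σ < b := hTltb j hj
      have := superadd' a b (b-σ-1) σ hbpos
      have he : (b-σ-1) + σ = b - 1 := by omega
      rwa [he] at this
    have hleg : ∀ i, 0 ≤ cborrow a b T (fun i => (((b-1)*a/b : ℕ) : ℤ) - D i) i := by
      intro i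
      by_cases h : i ∈ T
      · simp only [cborrow, if_pos h]
        have h1 := hDc i
        have h2 : (0:ℤ) ≤ (((b - T.card) * a / b : ℕ) : ℤ) := Int.natCast_nonneg _
        beta_reduce
        omega
      · simp only [cborrow, if_neg h]
        have h1 := hout i h
        have h2 := hsupσ i h
        rw [hTcard]
        beta_reduce
        omega
    apply Hsk T hTne hleg
    rw [stable0_iff]
    intro i
    by_cases h : i ∈ T
    · simp only [cborrow, if_pos h]
      have h1 := hTval i h
      have h2 := hDc i
      have h3 : (0:ℤ) ≤ (((b - σ) * a / b : ℕ) : ℤ) := Int.natCast_nonneg _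
      rw [hTcard]
      refine ⟨?_, ?_⟩ <;> beta_reduce <;> omega
    · simp only [cborrow, if_neg h]
      have h1 := hout i h
      have h2 := hsupσ i h
      have h3 := hD0 i
      have h4 : (0:ℤ) ≤ ((σ * a / b : ℕ) : ℤ) := Int.natCast_nonneg _
      rw [hTcard]
      refine ⟨?_, ?_⟩ <;> beta_reduce <;> omega

/-- with `e = 1 + ⌊a/b⌋`, the map `D ↦ (i ↦ a − e − D i)` is a
bijection from superstable (`(b−1)`-skeletal) configurations onto `0`-skeletal
configurations. -/
theorem duality_bijection (a b : ℕ) (ha : 0 < a) (hb : 1 < b)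
    (hab : a.Coprime b) :
    Set.BijOn (fun (D : Fin b → ℤ) (i : Fin b) => (a : ℤ) - ((1 + a / b : ℕ) : ℤ) - D i)
      {D : Fin b → ℤ | KStable a b (b - 1) D}
      {D : Fin b → ℤ | KSkeletal a b 0 D} := by
  have hfact := fact1 a b ha hb hab
  have hmap : (fun (D : Fin b → ℤ) (i : Fin b) => (a : ℤ) - ((1 + a / b : ℕ) : ℤ) - D i)
      = fun (D : Fin b → ℤ) (i : Fin b) => (((b-1)*a/b : ℕ) : ℤ) - D i := by
    funext D i
    have : ((1 + a / b : ℕ) : ℤ) = (a : ℤ) - (((b-1)*a/b : ℕ) : ℤ) := by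
      omega
    rw [this]
    ring
  rw [hmap]
  refine ⟨?_, ?_, ?_⟩
  · intro D hD
    exact (main_iff a b ha hb hab D).mp hD
  · intro D hD D' hD' h
    funext i
    have := congrFun h i
    beta_reduce at this
    linarith
  · intro E hE
    refine ⟨fun i => (((b-1)*a/b : ℕ) : ℤ) - E i, ?_, ?_⟩
    · have hcomp : (fun i => (((b-1)*a/b : ℕ) : ℤ) -
          ((fun i => (((b-1)*a/b : ℕ) : ℤ) - E i) i)) = E := by
        funext i; ring
      show KStable a b (b-1) _
      rw [main_iff a b ha hb hab, hcomp]
      exact hE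
    · funext i
      show (((b-1)*a/b : ℕ) : ℤ) - ((((b-1)*a/b : ℕ) : ℤ) - E i) = E i
      ring
end

section
/- Let a, b be coprime positive integers. Every chip configuration D ≥ 0 has exactly one superstabilization: there is a unique superstable configuration reachable from D by a finite sequence of legal cluster-fire moves. More generally, every equivalence class of the relation ≈ contains exactly one superstable representative. -/
/-- One (not necessarily legal) cluster-fire or borrow move. -/
def FireBorrowStep (a b : ℕ) (D D' : Fin b → ℤ) : Prop :=
  ∃ S : Finset (Fin b), D' = cfire a b S D ∨ D' = cborrow a b S D

/-- `D ≈ D'`: `D'` is obtained from `D` by a finite sequence of cluster-fire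
and borrow moves (with no legality restrictions). -/
def Approx (a b : ℕ) (D D' : Fin b → ℤ) : Prop :=
  Relation.ReflTransGen (FireBorrowStep a b) D D'

/-- `D` is superstable: `D ≥ 0` and no nonempty set can legally fire,
i.e. `D` is `(b−1)`-stable. -/
def Superstable (a b : ℕ) (D : Fin b → ℤ) : Prop :=
  KStable a b (b - 1) D

/-- One legal cluster-fire move. -/
def LegalFireStep (a b : ℕ) (D D' : Fin b → ℤ) : Prop :=
  (∀ i, 0 ≤ D i) ∧ ∃ S : Finset (Fin b), S.Nonempty ∧
    D' = cfire a b S D ∧ (∀ i, 0 ≤ D' i)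

open Finset

/-- If `u + v = n * m` and `n ∤ u` then `⌊u/n⌋ + ⌊v/n⌋ = m - 1`. -/
lemma div_add_div_aux {n u v m : ℕ} (hn : 0 < n) (huv : u + v = n * m)
    (hu : ¬ n ∣ u) : u / n + v / n + 1 = m := by
  have hnv : ¬ n ∣ v := by
    intro h
    have h1 : n ∣ u + v := huv ▸ Dvd.intro m rfl
    have := (Nat.dvd_sub h1 h)
    rw [Nat.add_sub_cancel] at this
    exact hu this
  have h1 : u % n ≠ 0 := fun h => hu (Nat.dvd_of_mod_eq_zero h)
  have h2 : v % n ≠ 0 := fun h => hnv (Nat.dvd_of_mod_eq_zero h)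
  have h3 : (u % n + v % n) % n = 0 := by
    rw [← Nat.add_mod, huv, Nat.mul_mod_right]
  obtain ⟨k, hk⟩ := Nat.dvd_of_mod_eq_zero h3
  have h4 : u % n < n := Nat.mod_lt _ hn
  have h5 : v % n < n := Nat.mod_lt _ hn
  have hk1 : k = 1 := by
    rcases k with _ | _ | k
    · simp at hk; omega
    · rfl
    · exfalso
      have : n * 2 ≤ n * (k + 1 + 1) := Nat.mul_le_mul_left n (by omega)
      omega
  subst hk1
  have e1 := Nat.div_add_mod u n
  have e2 := Nat.div_add_mod v n
  have : n * (u / n + v / n + 1) = n * m := by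
    rw [Nat.mul_add, Nat.mul_add, Nat.mul_one, ← huv]
    omega
  exact Nat.eq_of_mul_eq_mul_left hn this

/-- Key floor identity: for `0 < s < b` and `gcd(a,b) = 1`,
`⌊(b-s)a/b⌋ + ⌊sa/b⌋ + 1 = a`. -/
lemma key_div' {a b : ℕ} (ha : 0 < a) (hab : a.Coprime b) {s : ℕ} (hs : 0 < s) (hsb : s < b) :
    (b - s) * a / b + s * a / b + 1 = a := by
  have hb : 0 < b := lt_trans hs hsb
  apply div_add_div_aux hb
  · have : (b - s) + s = b := by omega
    rw [← Nat.add_mul, this, Nat.mul_comm]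
  · intro h
    have h2 : b ∣ (b - s) := (Nat.Coprime.dvd_of_dvd_mul_right (Nat.coprime_comm.mp hab)) h
    have := Nat.le_of_dvd (by omega) h2
    omega

lemma cborrow_cfire (a b : ℕ) (S : Finset (Fin b)) (D : Fin b → ℤ) :
    cborrow a b S (cfire a b S D) = D := by
  funext i; unfold cborrow cfire; by_cases h : i ∈ S <;> simp [h] <;> ring

lemma cfire_cborrow (a b : ℕ) (S : Finset (Fin b)) (D : Fin b → ℤ) :
    cfire a b S (cborrow a b S D) = D := by
  funext i; unfold cborrow cfire; by_cases h : i ∈ S <;> simp [h] <;> ring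

/-- Each move changes pairwise differences by a multiple of `a`. -/
lemma step_inv' {a b : ℕ} (ha : 0 < a) (hab : a.Coprime b) {D D' : Fin b → ℤ}
    (h : FireBorrowStep a b D D') (i j : Fin b) :
    (a : ℤ) ∣ (D' i - D' j) - (D i - D j) := by
  have main : ∀ (E : Fin b → ℤ) (S : Finset (Fin b)),
      (a : ℤ) ∣ (cfire a b S E i - cfire a b S E j) - (E i - E j) := by
    intro E S
    have huniv : ∀ x : Fin b, x ∉ S → S.card < b := by
      intro x hx
      rcases Nat.lt_or_ge S.card b with h | h
      · exact h
      · exfalso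
        have hcb : S.card = b := le_antisymm (by simpa using Finset.card_le_univ S) h
        have : S = univ := Finset.eq_univ_of_card S (by simp [hcb])
        exact hx (this ▸ Finset.mem_univ x)
    by_cases hi : i ∈ S <;> by_cases hj : j ∈ S <;>
      simp only [cfire, if_pos, if_neg, hi, hj, if_true, if_false]
    · exact ⟨0, by ring⟩
    · have hkey : (((b - S.card) * a / b : ℕ) : ℤ) + ((S.card * a / b : ℕ) : ℤ) + 1 = a := by
        exact_mod_cast key_div' ha hab (Finset.card_pos.mpr ⟨i, hi⟩) (huniv j hj)
      exact ⟨-1, by linarith⟩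
    · have hkey : (((b - S.card) * a / b : ℕ) : ℤ) + ((S.card * a / b : ℕ) : ℤ) + 1 = a := by
        exact_mod_cast key_div' ha hab (Finset.card_pos.mpr ⟨j, hj⟩) (huniv i hi)
      exact ⟨1, by linarith⟩
    · exact ⟨0, by ring⟩
  obtain ⟨S, hf | hbw⟩ := h
  · rw [hf]; exact main D S
  · have hDD : D = cfire a b S D' := by rw [hbw, cfire_cborrow]
    have h2 := main D' S
    rw [← hDD] at h2
    have := dvd_neg.mpr h2
    simpa using this

/-- `≈` preserves pairwise differences modulo `a`. -/
lemma approx_inv {a b : ℕ} (ha : 0 < a) (hab : a.Coprime b) {D D' : Fin b → ℤ}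
    (h : Approx a b D D') (i j : Fin b) :
    (a : ℤ) ∣ (D' i - D' j) - (D i - D j) := by
  induction h with
  | refl => simp
  | tail hstep hlast ih =>
    rename_i E F
    have h2 := step_inv' ha hab hlast i j
    have hsum := dvd_add h2 ih
    have he : (F i - F j - (E i - E j)) + (E i - E j - (D i - D j))
        = F i - F j - (D i - D j) := by ring
    rwa [he] at hsum

/-- Superstable configurations have all entries below `a`. -/
lemma superstable_lt {a b : ℕ} (ha : 0 < a) (hb : 0 < b) {D : Fin b → ℤ}
    (hD : Superstable a b D) (i : Fin b) : D i < a := by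
  by_contra hcon
  push_neg at hcon
  apply hD.2 {i} (Finset.singleton_nonempty i) (by simp)
  intro j
  unfold cfire
  by_cases hj : j ∈ ({i} : Finset (Fin b))
  · have hji : j = i := Finset.mem_singleton.mp hj
    rw [if_pos hj, Finset.card_singleton, hji]
    have hlt : (b - 1) * a / b < a := by
      rw [Nat.div_lt_iff_lt_mul hb]
      calc (b - 1) * a < b * a := by
            exact Nat.mul_lt_mul_of_lt_of_le (by omega) le_rfl ha
        _ = a * b := Nat.mul_comm b a
    have hlt' : (((b - 1) * a / b : ℕ) : ℤ) < a := by exact_mod_cast hlt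
    linarith
  · rw [if_neg hj]
    have := hD.1 j
    positivity

/-- A superstable configuration has some entry equal to `0`. -/
lemma superstable_not_all_pos {a b : ℕ} (hb : 0 < b) {D : Fin b → ℤ}
    (hD : Superstable a b D) : ¬ ∀ i, 1 ≤ D i := by
  intro hall
  have : Nonempty (Fin b) := ⟨⟨0, hb⟩⟩
  apply hD.2 univ Finset.univ_nonempty (by simp; omega)
  intro j
  unfold cfire
  rw [if_pos (Finset.mem_univ j), Finset.card_univ, Fintype.card_fin, Nat.sub_self]
  simpa using hall j

/-- Counting lemma: a superstable configuration has few large entries. -/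
lemma superstable_card_le {a b : ℕ} (ha : 0 < a) (hb : 0 < b) (hab : a.Coprime b)
    {D : Fin b → ℤ} (hD : Superstable a b D) {t : ℕ} (ht0 : 0 < t) (hta : t < a)
    {X : Finset (Fin b)} (hX : ∀ i ∈ X, (a : ℤ) - t ≤ D i) :
    X.card ≤ t * b / a := by
  by_contra hcon
  push_neg at hcon
  set s₀ := t * b / a + 1 with hs₀
  have hs₀b : s₀ ≤ b := by
    have h : t * b / a < b := by
      rw [Nat.div_lt_iff_lt_mul ha, Nat.mul_comm b a]
      exact mul_lt_mul_of_pos_right hta hb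
    exact Nat.succ_le_of_lt h
  obtain ⟨S, hSX, hScard⟩ := Finset.exists_subset_card_eq (s := X) (n := s₀) (Nat.succ_le_of_lt hcon)
  have hSne : S.Nonempty := Finset.card_pos.mp (by rw [hScard]; exact Nat.succ_pos _)
  have hb1 : b - 1 + 1 = b := by omega
  apply hD.2 S hSne (by rw [hb1, hScard]; exact hs₀b)
  intro j
  unfold cfire
  by_cases hj : j ∈ S
  · rw [if_pos hj, hScard]
    have hDj := hX j (hSX hj)
    have hta' : (t : ℤ) < a := by exact_mod_cast hta
    rcases Nat.lt_or_ge s₀ b with hlt | hge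
    · have hkey : (((b - s₀) * a / b : ℕ) : ℤ) + ((s₀ * a / b : ℕ) : ℤ) + 1 = a := by
        exact_mod_cast key_div' ha hab (Nat.succ_pos _) hlt
      have hq : t ≤ s₀ * a / b := by
        rw [Nat.le_div_iff_mul_le hb]
        have hstep : t * b < s₀ * a := by
          calc t * b = a * (t * b / a) + t * b % a := (Nat.div_add_mod _ _).symm
            _ < a * (t * b / a) + a := Nat.add_lt_add_left (Nat.mod_lt _ ha) _
            _ = (t * b / a + 1) * a := by ring
        exact le_of_lt hstep
      have hq' : (t : ℤ) ≤ ((s₀ * a / b : ℕ) : ℤ) := by exact_mod_cast hq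
      linarith
    · have hsb : s₀ = b := le_antisymm hs₀b hge
      rw [hsb, Nat.sub_self, Nat.zero_mul, Nat.zero_div]
      simp only [Nat.cast_zero]
      linarith
  · rw [if_neg hj]
    have := hD.1 j
    positivity

/-- Two superstable configurations with the same pairwise differences mod `a`
are equal. -/
lemma superstable_eq {a b : ℕ} (ha : 0 < a) (hb : 0 < b) (hab : a.Coprime b)
    {D D' : Fin b → ℤ} (h1 : Superstable a b D) (h2 : Superstable a b D')
    (hinv : ∀ i j, (a : ℤ) ∣ (D' i - D' j) - (D i - D j)) : D = D' := by
  have ha' : (0 : ℤ) < a := by exact_mod_cast ha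
  set i0 : Fin b := ⟨0, hb⟩ with hi0
  set t : ℤ := (D' i0 - D i0) % a with htdef
  have ht0 : 0 ≤ t := Int.emod_nonneg _ (by positivity)
  have hta : t < a := Int.emod_lt_of_pos _ ha'
  have hdvd : ∀ i, (a : ℤ) ∣ (D' i - D i) - t := by
    intro i
    have hA := hinv i i0
    have hB : (a : ℤ) ∣ (D' i0 - D i0) - t :=
      ⟨(D' i0 - D i0) / a, by rw [htdef, Int.emod_def]; ring⟩
    have hsum := dvd_add hA hB
    have he : ((D' i - D' i0) - (D i - D i0)) + ((D' i0 - D i0) - t)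
        = (D' i - D i) - t := by ring
    rwa [he] at hsum
  have key : ∀ i, D' i = D i + t ∨ D' i = D i + t - a := by
    intro i
    obtain ⟨k, hk⟩ := hdvd i
    have hb1 : 0 ≤ D i := h1.1 i
    have hb2 : D i < a := superstable_lt ha hb h1 i
    have hb3 : 0 ≤ D' i := h2.1 i
    have hb4 : D' i < a := superstable_lt ha hb h2 i
    have hu : (a : ℤ) * k < a * 1 := by rw [mul_one]; linarith
    have hl : (a : ℤ) * (-2) < a * k := by linarith
    have hk1 : k < 1 := lt_of_mul_lt_mul_left hu (le_of_lt ha')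
    have hk2 : (-2 : ℤ) < k := lt_of_mul_lt_mul_left hl (le_of_lt ha')
    interval_cases k
    · right; linarith
    · left; linarith
  rcases eq_or_lt_of_le ht0 with hteq | htpos
  · funext i
    rcases key i with h | h
    · rw [h, ← hteq, add_zero]
    · exfalso
      have hb2 : D i < a := superstable_lt ha hb h1 i
      have hb3 : 0 ≤ D' i := h2.1 i
      linarith [h, hteq]
  · exfalso
    set A := univ.filter (fun i => D' i = D i + t) with hA
    set B := univ.filter (fun i => ¬ D' i = D i + t) with hB
    have hBmem : ∀ i ∈ B, D' i = D i + t - a := by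
      intro i hi
      have := (Finset.mem_filter.mp hi).2
      rcases key i with h | h
      · exact absurd h this
      · exact h
    have hAmem : ∀ i ∈ A, D' i = D i + t := fun i hi => (Finset.mem_filter.mp hi).2
    have hBne : B.Nonempty := by
      rw [Finset.nonempty_iff_ne_empty]
      intro hemp
      apply superstable_not_all_pos hb h2
      intro i
      have hiA : D' i = D i + t := by
        by_contra hcon
        have : i ∈ B := Finset.mem_filter.mpr ⟨Finset.mem_univ i, hcon⟩
        rw [hemp] at this
        exact absurd this (Finset.notMem_empty i)
      have := h1.1 i
      rw [hiA]; linarith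
    have hAne : A.Nonempty := by
      rw [Finset.nonempty_iff_ne_empty]
      intro hemp
      apply superstable_not_all_pos hb h1
      intro i
      have hiB : D' i = D i + t - a := by
        apply hBmem
        refine Finset.mem_filter.mpr ⟨Finset.mem_univ i, ?_⟩
        intro hcon
        have : i ∈ A := Finset.mem_filter.mpr ⟨Finset.mem_univ i, hcon⟩
        rw [hemp] at this
        exact absurd this (Finset.notMem_empty i)
      have := h2.1 i
      linarith [hiB]
    set tn : ℕ := t.toNat with htn
    have htnc : (tn : ℤ) = t := Int.toNat_of_nonneg ht0
    have htn0 : 0 < tn := by omega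
    have htna : tn < a := by
      have : (tn : ℤ) < a := by rw [htnc]; exact hta
      exact_mod_cast this
    have hB2 : B.card ≤ tn * b / a := by
      apply superstable_card_le ha hb hab h1 htn0 htna
      intro i hi
      have h := hBmem i hi
      have := h2.1 i
      rw [htnc]; linarith
    have hA2 : A.card ≤ (a - tn) * b / a := by
      apply superstable_card_le ha hb hab h2 (by omega) (by omega)
      intro i hi
      have h := hAmem i hi
      have := h1.1 i
      have hc : ((a - tn : ℕ) : ℤ) = (a : ℤ) - tn := by
        push_cast [Nat.cast_sub (le_of_lt htna)]; ring
      rw [hc, htnc]; linarith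
    have hcardsum : A.card + B.card = b := by
      rw [hA, hB, Finset.card_filter_add_card_filter_not]
      simp
    have harith : tn * b / a + (a - tn) * b / a + 1 = b := by
      apply div_add_div_aux ha
      · rw [← Nat.add_mul]
        have : tn + (a - tn) = a := by omega
        rw [this]
      · intro hdvd
        have : a ∣ tn := Nat.Coprime.dvd_of_dvd_mul_right hab hdvd
        have := Nat.le_of_dvd htn0 this
        omega
    have hfinal : A.card + B.card ≤ (a - tn) * b / a + tn * b / a :=
      Nat.add_le_add hA2 hB2
    rw [hcardsum] at hfinal
    linarith [hfinal, harith]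

/-- Each nonempty cluster-fire strictly decreases the total number of chips. -/
lemma sum_cfire_lt {a b : ℕ} (ha : 0 < a) (hb : 0 < b) (hab : a.Coprime b)
    {S : Finset (Fin b)} (hS : S.Nonempty) (D : Fin b → ℤ) :
    ∑ i, cfire a b S D i < ∑ i, D i := by
  have hcard : S.card ≤ b := by simpa using Finset.card_le_univ S
  have hsum : ∑ i, cfire a b S D i
      = ∑ i, D i + ((S.card : ℤ) * (-1 - (((b - S.card) * a / b : ℕ) : ℤ))
        + ((b : ℤ) - S.card) * ((S.card * a / b : ℕ) : ℤ)) := by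
    have : ∀ i, cfire a b S D i
        = D i + (if i ∈ S then (-1 - (((b - S.card) * a / b : ℕ) : ℤ))
            else ((S.card * a / b : ℕ) : ℤ)) := by
      intro i; unfold cfire; split <;> ring
    rw [Finset.sum_congr rfl (fun i _ => this i), Finset.sum_add_distrib]
    congr 1
    rw [Finset.sum_ite, Finset.sum_const, Finset.sum_const]
    have h1 : (univ.filter (· ∈ S)) = S := by simp
    have h2 : (univ.filter (¬ · ∈ S)).card = b - S.card := by
      have he : univ.filter (¬ · ∈ S) = Sᶜ := by ext i; simp
      rw [he, Finset.card_compl, Fintype.card_fin]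
    rw [h1, h2, nsmul_eq_mul, nsmul_eq_mul, Nat.cast_sub hcard]
  rw [hsum]
  rcases Nat.lt_or_ge S.card b with hlt | hge
  · have hkey := key_div' ha hab (Finset.card_pos.mpr hS) hlt
    have hkey' : (((b - S.card) * a / b : ℕ) : ℤ) + ((S.card * a / b : ℕ) : ℤ) + 1 = a := by
      exact_mod_cast hkey
    have hql : (S.card * a / b) * b < S.card * a := by
      have hle : (S.card * a / b) * b ≤ S.card * a := Nat.div_mul_le_self _ _
      have hne : (S.card * a / b) * b ≠ S.card * a := by
        intro h
        have hdvd : b ∣ S.card * a := ⟨S.card * a / b, by rw [Nat.mul_comm b]; exact h.symm⟩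
        have : b ∣ S.card := (Nat.Coprime.dvd_of_dvd_mul_right
          (Nat.coprime_comm.mp hab)) hdvd
        have := Nat.le_of_dvd (Finset.card_pos.mpr hS) this
        omega
      omega
    have hql' : ((S.card * a / b : ℕ) : ℤ) * b < (S.card : ℤ) * a := by exact_mod_cast hql
    nlinarith [hql', hkey']
  · have hcb : S.card = b := le_antisymm hcard hge
    rw [hcb]
    simp [Nat.sub_self]
    exact_mod_cast hb

/-- Any nonnegative configuration legally fires down to a superstable one. -/
lemma exists_stab {a b : ℕ} (ha : 0 < a) (hb : 0 < b) (hab : a.Coprime b) :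
    ∀ n : ℕ, ∀ D : Fin b → ℤ, (∀ i, 0 ≤ D i) → (∑ i, D i).toNat ≤ n →
      ∃ D', Relation.ReflTransGen (LegalFireStep a b) D D' ∧ Superstable a b D' := by
  intro n
  induction n using Nat.strong_induction_on with
  | _ n ih =>
    intro D hD hsum
    by_cases h : Superstable a b D
    · exact ⟨D, Relation.ReflTransGen.refl, h⟩
    · have h2 : ¬ ∀ S : Finset (Fin b), S.Nonempty → S.card ≤ (b - 1) + 1 →
          ¬ (∀ i, 0 ≤ cfire a b S D i) := fun hq => h ⟨hD, hq⟩
      push_neg at h2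
      obtain ⟨S, hSne, _, hfire⟩ := h2
      have hlt := sum_cfire_lt ha hb hab hSne D
      have hpos : (0 : ℤ) ≤ ∑ i, cfire a b S D i :=
        Finset.sum_nonneg (fun i _ => hfire i)
      have hpos0 : (0 : ℤ) ≤ ∑ i, D i := Finset.sum_nonneg (fun i _ => hD i)
      have hm : (∑ i, cfire a b S D i).toNat < n := by omega
      obtain ⟨D', hpath, hss⟩ := ih _ hm (cfire a b S D) hfire le_rfl
      exact ⟨D', Relation.ReflTransGen.head ⟨hD, S, hSne, rfl, hfire⟩ hpath, hss⟩

/-- Adding a constant `N` to every entry is achieved by `N` full-set borrows. -/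
lemma approx_add_const {a b : ℕ} (D : Fin b → ℤ) (N : ℕ) :
    Approx a b D (fun i => D i + N) := by
  induction N with
  | zero => simp only [Nat.cast_zero, add_zero]; exact Relation.ReflTransGen.refl
  | succ N ihN =>
    apply Relation.ReflTransGen.tail ihN
    refine ⟨univ, Or.inr ?_⟩
    funext i
    unfold cborrow
    rw [if_pos (Finset.mem_univ i), Finset.card_univ, Fintype.card_fin, Nat.sub_self,
      Nat.zero_mul, Nat.zero_div]
    push_cast
    ring

lemma legal_approx {a b : ℕ} {D D' : Fin b → ℤ}
    (h : Relation.ReflTransGen (LegalFireStep a b) D D') : Approx a b D D' := by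
  refine Relation.ReflTransGen.mono ?_ _ _ h
  rintro x y ⟨_, S, _, hy, _⟩
  exact ⟨S, Or.inl hy⟩

/-- every `D ≥ 0` has a unique superstabilization, and more
generally every `≈`-equivalence class contains exactly one superstable
configuration. -/
theorem unique_superstabilization (a b : ℕ) (ha : 0 < a) (hb : 0 < b)
    (hab : a.Coprime b) :
    (∀ D : Fin b → ℤ, (∀ i, 0 ≤ D i) →
      ∃! D' : Fin b → ℤ,
        Relation.ReflTransGen (LegalFireStep a b) D D' ∧ Superstable a b D') ∧
    (∀ D : Fin b → ℤ, ∃! D' : Fin b → ℤ, Approx a b D D' ∧ Superstable a b D') := by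
  have uniq : ∀ D y z : Fin b → ℤ, Approx a b D y → Approx a b D z →
      Superstable a b y → Superstable a b z → y = z := by
    intro D y z hy hz hsy hsz
    apply superstable_eq ha hb hab hsy hsz
    intro i j
    have hy' := approx_inv ha hab hy i j
    have hz' := approx_inv ha hab hz i j
    have hd := dvd_sub hz' hy'
    have he : ((z i - z j) - (D i - D j)) - ((y i - y j) - (D i - D j))
        = (z i - z j) - (y i - y j) := by ring
    rwa [he] at hd
  constructor
  · intro D hD
    obtain ⟨D', hpath, hss⟩ := exists_stab ha hb hab (∑ i, D i).toNat D hD le_rfl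
    refine ⟨D', ⟨hpath, hss⟩, ?_⟩
    rintro y ⟨hy, hyss⟩
    exact uniq D y D' (legal_approx hy) (legal_approx hpath) hyss hss
  · intro D
    set N : ℕ := ∑ i, (-D i).toNat with hN
    have hE : ∀ i, 0 ≤ D i + N := by
      intro i
      have h1 : (-D i).toNat ≤ N := by
        rw [hN]
        exact Finset.single_le_sum (f := fun j => (-D j).toNat)
          (fun j _ => Nat.zero_le _) (Finset.mem_univ i)
      have h2 : -D i ≤ ((-D i).toNat : ℤ) := Int.self_le_toNat _
      have h3 : ((-D i).toNat : ℤ) ≤ N := by exact_mod_cast h1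
      linarith
    obtain ⟨D', hpath, hss⟩ := exists_stab ha hb hab
      (∑ i, (D i + N)).toNat (fun i => D i + N) hE le_rfl
    have happrox : Approx a b D D' :=
      Relation.ReflTransGen.trans (approx_add_const D N) (legal_approx hpath)
    refine ⟨D', ⟨happrox, hss⟩, ?_⟩
    rintro y ⟨hy, hyss⟩
    exact uniq D y D' hy happrox hyss hss
end

section
/- Let a, b be coprime positive integers and let K be the subgroup of ℤ^b generated by a·e_1, …, a·e_b and the all-ones vector 1 = (1,…,1). For all D, D' ∈ ℤ^b, D ≈ D' if and only if D − D' ∈ K; that is, the firing-and-borrowing equivalence relation ≈ coincides with congruence modulo K. -/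
/-- The subgroup `K` of `ℤ^b` generated by `a·e_1, …, a·e_b` and the all-ones
vector. -/
def Kgrp (a b : ℕ) : AddSubgroup (Fin b → ℤ) :=
  AddSubgroup.closure
    ({fun _ => 1} ∪ Set.range fun i : Fin b => fun j => if j = i then (a : ℤ) else 0)

-- key division identity
lemma keydiv (a b c : ℕ) (hb : 0 < b) (hc : 0 < c) (hca : c < a * b) (h : ¬ b ∣ c) :
    (a * b - c) / b + c / b + 1 = a := by
  obtain ⟨q, r, hr, hrb, rfl⟩ : ∃ q r, 0 < r ∧ r < b ∧ c = b * q + r := by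
    refine ⟨c / b, c % b, ?_, Nat.mod_lt _ hb, (Nat.div_add_mod c b).symm⟩
    exact Nat.pos_of_ne_zero fun h0 => h (Nat.dvd_of_mod_eq_zero h0)
  have hqa : q < a := by
    by_contra hq
    push_neg at hq
    have : a * b ≤ b * q := by
      calc a * b = b * a := Nat.mul_comm a b
      _ ≤ b * q := Nat.mul_le_mul_left b hq
    omega
  have e1 : a * b - (b * q + r) = b * (a - (q + 1)) + (b - r) := by
    have h1 : b * q + r ≤ a * b := le_of_lt hca
    have h2 : q + 1 ≤ a := hqa
    have h3 : r ≤ b := le_of_lt hrb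
    zify [h1, h2, h3]
    ring
  rw [e1, Nat.mul_add_div hb, Nat.mul_add_div hb,
    Nat.div_eq_of_lt (show b - r < b by omega), Nat.div_eq_of_lt hrb]
  omega

-- change vector of a fire move
def chg (a b : ℕ) (S : Finset (Fin b)) : Fin b → ℤ :=
  fun i => if i ∈ S then -1 - (((b - S.card) * a / b : ℕ) : ℤ) else ((S.card * a / b : ℕ) : ℤ)

lemma cfire_eq (a b : ℕ) (S : Finset (Fin b)) (D : Fin b → ℤ) :
    cfire a b S D = D + chg a b S := by
  funext i
  simp only [cfire, chg, Pi.add_apply]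
  split <;> ring

lemma cborrow_eq (a b : ℕ) (S : Finset (Fin b)) (D : Fin b → ℤ) :
    cborrow a b S D = D - chg a b S := by
  funext i
  simp only [cborrow, chg, Pi.sub_apply]
  split <;> ring

lemma one_mem_K (a b : ℕ) : (fun _ => (1:ℤ)) ∈ Kgrp a b := by
  rw [Kgrp]
  exact AddSubgroup.subset_closure (Set.mem_union_left _ (Set.mem_singleton _))

lemma gen_mem_K (a b : ℕ) (i : Fin b) :
    (fun j => if j = i then (a:ℤ) else 0) ∈ Kgrp a b := by
  rw [Kgrp]
  exact AddSubgroup.subset_closure (Set.mem_union_right _ ⟨i, rfl⟩)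

lemma chg_mem (a b : ℕ) (ha : 0 < a) (hab : a.Coprime b) (S : Finset (Fin b)) :
    chg a b S ∈ Kgrp a b := by
  rcases Nat.eq_zero_or_pos S.card with hc0 | hcpos
  · have : chg a b S = 0 := by
      funext i
      have hS : S = ∅ := Finset.card_eq_zero.mp hc0
      simp [chg, hS, hc0]
    rw [this]; exact zero_mem _
  rcases eq_or_lt_of_le (Finset.card_le_univ S) with hcb | hlt
  · -- S = univ
    have hb' : S.card = b := by simpa using hcb
    have : chg a b S = -(fun _ => (1:ℤ)) := by
      funext i
      have hi : i ∈ S := by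
        have : S = Finset.univ := Finset.eq_univ_of_card S (by simpa using hb')
        simp [this]
      simp [chg, hi, hb']
    rw [this]
    exact neg_mem (one_mem_K a b)
  · have hsb : S.card < b := by simpa using hlt
    have hkey : (b - S.card) * a / b + S.card * a / b + 1 = a := by
      have h1 : (b - S.card) * a = a * b - S.card * a := by
        rw [Nat.sub_mul, Nat.mul_comm b a]
      rw [h1]
      apply keydiv a b (S.card * a) (lt_of_le_of_lt (Nat.zero_le _) hsb)
        (Nat.mul_pos hcpos ha)
      · calc S.card * a < b * a := Nat.mul_lt_mul_of_lt_of_le hsb (le_refl a) ha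
          _ = a * b := Nat.mul_comm b a
      · intro hdvd
        have : b ∣ S.card := (Nat.Coprime.dvd_of_dvd_mul_right hab.symm hdvd)
        have := Nat.le_of_dvd hcpos this
        omega
    have heq : chg a b S = ((S.card * a / b : ℕ) : ℤ) • (fun _ => (1:ℤ))
        - ∑ i ∈ S, (fun j => if j = i then (a : ℤ) else 0) := by
      funext j
      have hsum : (∑ i ∈ S, (fun j => if j = i then (a : ℤ) else 0)) j
          = if j ∈ S then (a : ℤ) else 0 := by
        rw [Finset.sum_apply]
        simp [Finset.sum_ite_eq]
      simp only [chg, Pi.sub_apply, Pi.smul_apply, smul_eq_mul, mul_one, hsum]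
      have hk : (((b - S.card) * a / b : ℕ) : ℤ) + ((S.card * a / b : ℕ) : ℤ) + 1 = a := by
        exact_mod_cast congrArg (Nat.cast : ℕ → ℤ) hkey
      split <;> omega
    rw [heq]
    refine sub_mem (zsmul_mem (one_mem_K a b) _) ?_
    exact sum_mem fun i _ => gen_mem_K a b i

lemma step_symm {a b : ℕ} {D D' : Fin b → ℤ} (h : FireBorrowStep a b D D') :
    FireBorrowStep a b D' D := by
  obtain ⟨S, rfl | rfl⟩ := h
  · exact ⟨S, Or.inr (by rw [cborrow_eq, cfire_eq, add_sub_cancel_right])⟩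
  · exact ⟨S, Or.inl (by rw [cfire_eq, cborrow_eq, sub_add_cancel])⟩

lemma approx_symm {a b : ℕ} {D D' : Fin b → ℤ} (h : Approx a b D D') :
    Approx a b D' D :=
  haveI : Std.Symm (FireBorrowStep a b) := ⟨fun _ _ hs => step_symm hs⟩
  Std.Symm.symm (r := Relation.ReflTransGen (FireBorrowStep a b)) _ _ h

-- subgroup of reachable translations
def Tgrp (a b : ℕ) : AddSubgroup (Fin b → ℤ) where
  carrier := {g | ∀ D, Approx a b D (D + g)}
  zero_mem' := fun D => by rw [add_zero]; exact Relation.ReflTransGen.refl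
  add_mem' := by
    intro g h hg hh D
    refine (hg D).trans ?_
    have := hh (D + g)
    rwa [add_assoc] at this
  neg_mem' := by
    intro g hg D
    have := approx_symm (hg (D + -g))
    rwa [add_assoc, neg_add_cancel, add_zero] at this

lemma one_mem_T (a b : ℕ) : (fun _ => (1:ℤ)) ∈ Tgrp a b := by
  intro D
  refine Relation.ReflTransGen.single ⟨Finset.univ, Or.inr ?_⟩
  funext i
  simp [cborrow]

lemma K_le_T (a b : ℕ) (ha : 0 < a) (hb : 0 < b) (hab : a.Coprime b) :
    Kgrp a b ≤ Tgrp a b := by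
  rw [Kgrp, AddSubgroup.closure_le]
  rintro g (rfl | ⟨i, rfl⟩)
  · exact one_mem_T a b
  show (fun j => if j = i then (a:ℤ) else 0) ∈ Tgrp a b
  by_cases hb1 : b = 1
  · subst hb1
    have : (fun j : Fin 1 => if j = i then (a:ℤ) else 0) = a • (fun _ => (1:ℤ)) := by
      funext j
      simp [Subsingleton.elim j i]
    rw [this]
    exact nsmul_mem (one_mem_T a 1) a
  · have hb2 : 2 ≤ b := by omega
    have hndvd : ¬ b ∣ a := by
      intro hd
      have h1 : b ∣ Nat.gcd a b := Nat.dvd_gcd hd dvd_rfl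
      rw [hab] at h1
      have := Nat.le_of_dvd one_pos h1
      omega
    have hkey : (b - 1) * a / b + a / b + 1 = a := by
      have h1 : (b - 1) * a = a * b - a := by
        rw [Nat.sub_mul, Nat.mul_comm b a, Nat.one_mul]
      rw [h1]
      apply keydiv a b a hb ha
      · have h2 : 1 * a < b * a := Nat.mul_lt_mul_of_lt_of_le (by omega) (le_refl a) ha
        rw [Nat.one_mul, Nat.mul_comm] at h2
        exact h2
      · exact hndvd
    have hu : (-chg a b {i}) ∈ Tgrp a b := by
      intro D
      refine Relation.ReflTransGen.single ⟨{i}, Or.inr ?_⟩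
      rw [cborrow_eq, sub_eq_add_neg]
    have heq : (fun j => if j = i then (a:ℤ) else 0)
        = (-chg a b {i}) + ((a / b : ℕ) : ℤ) • (fun _ => (1:ℤ)) := by
      funext j
      have hcard : ({i} : Finset (Fin b)).card = 1 := Finset.card_singleton i
      simp only [Pi.add_apply, Pi.neg_apply, Pi.smul_apply, smul_eq_mul, mul_one, chg, hcard,
        Finset.mem_singleton, Nat.one_mul]
      have hk : (((b - 1) * a / b : ℕ) : ℤ) + ((a / b : ℕ) : ℤ) + 1 = a := by
        exact_mod_cast congrArg (Nat.cast : ℕ → ℤ) hkey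
      split <;> omega
    rw [heq]
    exact add_mem hu (zsmul_mem (one_mem_T a b) _)

/-- the firing-and-borrowing equivalence `≈` coincides with
congruence modulo the subgroup `K`. -/
theorem approx_iff_mem_K (a b : ℕ) (ha : 0 < a) (hb : 0 < b)
    (hab : a.Coprime b) (D D' : Fin b → ℤ) :
    Approx a b D D' ↔ D - D' ∈ Kgrp a b := by
  constructor
  · intro h
    induction h with
    | refl => simpa using zero_mem (Kgrp a b)
    | @tail c D' h1 h2 ih =>
      obtain ⟨S, rfl | rfl⟩ := h2
      · rw [cfire_eq, show D - (c + chg a b S) = (D - c) - chg a b S by abel]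
        exact sub_mem ih (chg_mem a b ha hab S)
      · rw [cborrow_eq, show D - (c - chg a b S) = (D - c) + chg a b S by abel]
        exact add_mem ih (chg_mem a b ha hab S)
  · intro h
    have := K_le_T a b ha hb hab h D'
    rw [show D' + (D - D') = D by abel] at this
    exact approx_symm this
end

section
/- Let a, b be coprime positive integers and let K be the subgroup of ℤ^b generated by a·e_1, …, a·e_b and the all-ones vector 1 = (1,…,1). Then the quotient group ℤ^b/K is isomorphic to (ℤ/aℤ)^{b−1}, and for each k with 0 ≤ k < b, every coset of K in ℤ^b contains exactly one k-skeletal chip configuration. -/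
namespace QS


/-- `⌊j·a/b⌋` as an integer. -/
def mm (a b j : ℕ) : ℤ := ((j * a / b : ℕ) : ℤ)

/-- number of coordinates strictly above a threshold -/
def cnt {b : ℕ} (D : Fin b → ℤ) (q : ℤ) : ℕ :=
  (Finset.univ.filter fun i => q < D i).card

lemma mm_nonneg (a b j : ℕ) : 0 ≤ mm a b j := Int.natCast_nonneg _

lemma mm_zero (a b : ℕ) : mm a b 0 = 0 := by simp [mm]

lemma mm_b {a b : ℕ} (hb : 0 < b) : mm a b b = a := by
  simp [mm, Nat.mul_comm b a, Nat.mul_div_cancel _ hb]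

lemma mm_mono (a b : ℕ) {j j' : ℕ} (h : j ≤ j') : mm a b j ≤ mm a b j' := by
  unfold mm
  exact_mod_cast Nat.div_le_div_right (c := b) (Nat.mul_le_mul_right a h)

lemma mm_superadd (a b u v : ℕ) : mm a b u + mm a b v ≤ mm a b (u + v) := by
  have h := Nat.add_div_le_add_div (u * a) (v * a) b
  unfold mm
  rw [show (u + v) * a = u * a + v * a by ring]
  exact_mod_cast h

lemma mm_subadd {a b : ℕ} (hb : 0 < b) (u v : ℕ) :
    mm a b (u + v) ≤ mm a b u + mm a b v + 1 := by
  have h : (u + v) * a / b < u * a / b + v * a / b + 2 := by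
    rw [Nat.div_lt_iff_lt_mul hb]
    have h1 := Nat.div_add_mod (u * a) b
    have h2 := Nat.div_add_mod (v * a) b
    have h3 : u * a % b < b := Nat.mod_lt _ hb
    have h4 : v * a % b < b := Nat.mod_lt _ hb
    calc (u + v) * a = u * a + v * a := by ring
    _ < (u * a / b + v * a / b + 2) * b := by nlinarith [h1, h2, h3, h4]
  unfold mm
  exact_mod_cast Nat.lt_succ_iff.mp (by omega : (u+v) * a / b < (u * a / b + v * a / b + 1) + 1)

/-- For `0 < j < b`: `b·m j < j·a < b·m j + b`. -/
lemma mm_strict {a b j : ℕ} (hab : a.Coprime b) (hj0 : 0 < j) (hjb : j < b) :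
    (b : ℤ) * mm a b j < j * a ∧ (j : ℤ) * a < b * mm a b j + b := by
  have hb : 0 < b := lt_trans hj0 hjb
  have hdvd : ¬ (b ∣ j * a) := by
    intro hd
    have hba : Nat.Coprime b a := (Nat.coprime_comm).mp hab
    have : b ∣ j := hba.dvd_of_dvd_mul_right hd
    have := Nat.le_of_dvd hj0 this
    omega
  have heq := (Nat.div_add_mod (j * a) b)
  have hr1 : 0 < j * a % b := Nat.pos_of_ne_zero (fun h => hdvd (Nat.dvd_of_mod_eq_zero h))
  have hr2 : j * a % b < b := Nat.mod_lt _ hb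
  unfold mm
  constructor
  · exact_mod_cast (by omega : b * (j * a / b) < j * a)
  · exact_mod_cast (by omega : j * a < b * (j * a / b) + b)

/-- `m s + m (b − s) + 1 = a` for `0 < s < b`. -/
lemma mm_compl {a b s : ℕ} (hab : a.Coprime b) (hs0 : 0 < s) (hsb : s < b) :
    mm a b s + mm a b (b - s) + 1 = a := by
  have hb : 0 < b := lt_trans hs0 hsb
  have h1 := mm_strict hab hs0 hsb
  have h2 := mm_strict hab (j := b - s) (by omega) (by omega)
  have hsub := mm_subadd (a := a) hb s (b - s)
  have hsup := mm_superadd a b s (b - s)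
  rw [show s + (b - s) = b by omega, mm_b hb] at hsub hsup
  have e1 : ((b - s : ℕ) : ℤ) = (b : ℤ) - s := by
    push_cast [Nat.cast_sub (le_of_lt hsb)]; ring
  have c2 : (b:ℤ) * mm a b (b - s) < ((b:ℤ) - s) * a := by rw [← e1]; exact_mod_cast h2.1
  have c1 : (b : ℤ) * mm a b s < (s : ℤ) * a := h1.1
  have hlt : (b:ℤ) * (mm a b s + mm a b (b - s)) < b * a := by
    calc (b:ℤ) * (mm a b s + mm a b (b - s)) = b * mm a b s + b * mm a b (b-s) := by ring
    _ < (s:ℤ) * a + ((b:ℤ) - s) * a := by omega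
    _ = (b:ℤ) * a := by ring
  have hle : mm a b s + mm a b (b - s) < (a : ℤ) :=
    lt_of_mul_lt_mul_left hlt (by positivity)
  omega


section cntfacts
variable {b : ℕ}

lemma cnt_le (D : Fin b → ℤ) (q : ℤ) : cnt D q ≤ b := by
  simpa [cnt] using Finset.card_filter_le Finset.univ (fun i => q < D i)

lemma cnt_mono_pt {D E : Fin b → ℤ} (h : ∀ i, D i ≤ E i) (q : ℤ) : cnt D q ≤ cnt E q := by
  apply Finset.card_le_card
  intro i hi
  simp only [Finset.mem_filter, Finset.mem_univ, true_and] at *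
  exact lt_of_lt_of_le hi (h i)

lemma cnt_anti (D : Fin b → ℤ) {q q' : ℤ} (h : q ≤ q') : cnt D q' ≤ cnt D q := by
  apply Finset.card_le_card
  intro i hi
  simp only [Finset.mem_filter, Finset.mem_univ, true_and] at *
  exact lt_of_le_of_lt h hi

end cntfacts

/-- count form of `k`-stability -/
def Sconf (a b k : ℕ) (D : Fin b → ℤ) : Prop :=
  (∀ i, 0 ≤ D i) ∧ ∀ σ : ℕ, 1 ≤ σ → σ ≤ k + 1 → cnt D (mm a b (b - σ)) < σ

lemma kstable_iff_sconf {a b k : ℕ} (hk : k < b) (D : Fin b → ℤ) :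
    KStable a b k D ↔ Sconf a b k D := by
  constructor
  · rintro ⟨h0, hS⟩
    refine ⟨h0, fun σ h1 h2 => ?_⟩
    by_contra hc
    push_neg at hc
    obtain ⟨S, hSsub, hScard⟩ := Finset.exists_subset_card_eq hc
    refine hS S (Finset.card_pos.mp (by omega)) (by omega) (fun i => ?_)
    unfold cfire
    by_cases hi : i ∈ S
    · simp only [hi, if_true]
      have := hSsub hi
      simp only [Finset.mem_filter, Finset.mem_univ, true_and] at this
      rw [hScard]
      have : mm a b (b - σ) < D i := this
      unfold mm at this
      omega
    · simp only [hi, if_false]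
      have := h0 i
      positivity
  · rintro ⟨h0, hc⟩
    refine ⟨h0, fun S hne hcard hleg => ?_⟩
    have h1 : 1 ≤ S.card := Finset.card_pos.mpr hne
    have hlt := hc S.card h1 hcard
    have hsub : S ⊆ Finset.univ.filter fun i => mm a b (b - S.card) < D i := by
      intro i hi
      have := hleg i
      unfold cfire at this
      simp only [hi, if_true] at this
      simp only [Finset.mem_filter, Finset.mem_univ, true_and]
      unfold mm
      omega
    have := Finset.card_le_card hsub
    unfold cnt at hlt
    omega

/-- `D` and `E` are in the same coset of `K`. -/
def Rel (a : ℕ) {b : ℕ} (D E : Fin b → ℤ) : Prop :=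
  ∃ c : ℤ, ∀ i, (a : ℤ) ∣ (E i - D i - c)

lemma rel_refl (a : ℕ) {b : ℕ} (D : Fin b → ℤ) : Rel a D D := ⟨0, fun i => by simp⟩

lemma rel_symm {a : ℕ} {b : ℕ} {D E : Fin b → ℤ} (h : Rel a D E) : Rel a E D := by
  obtain ⟨c, hc⟩ := h
  refine ⟨-c, fun i => ?_⟩
  have h := hc i
  have e : D i - E i - -c = -(E i - D i - c) := by ring
  rw [e]
  exact dvd_neg.mpr h

lemma rel_trans {a : ℕ} {b : ℕ} {D E F : Fin b → ℤ} (h1 : Rel a D E) (h2 : Rel a E F) :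
    Rel a D F := by
  obtain ⟨c1, hc1⟩ := h1
  obtain ⟨c2, hc2⟩ := h2
  refine ⟨c1 + c2, fun i => ?_⟩
  have := dvd_add (hc1 i) (hc2 i)
  have e : (E i - D i - c1) + (F i - E i - c2) = F i - D i - (c1 + c2) := by ring
  rwa [e] at this

/-- stability is downward closed -/
lemma sconf_sandwich {a b k : ℕ} {X G : Fin b → ℤ} (hG : Sconf a b k G)
    (h0 : ∀ i, 0 ≤ X i) (hle : ∀ i, X i ≤ G i) : Sconf a b k X :=
  ⟨h0, fun σ h1 h2 => lt_of_le_of_lt (cnt_mono_pt hle _) (hG.2 σ h1 h2)⟩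


/-- sum of a configuration -/
def ssum {b : ℕ} (D : Fin b → ℤ) : ℤ := ∑ i, D i

lemma mm_lt_a {a b j : ℕ} (ha : 0 < a) (hb : 0 < b) (hj : j < b) : mm a b j < a := by
  unfold mm
  have : j * a / b < a := by
    rw [Nat.div_lt_iff_lt_mul hb]
    calc j * a < b * a := by exact Nat.mul_lt_mul_of_lt_of_le hj (le_refl a) ha
    _ = a * b := Nat.mul_comm _ _
  exact_mod_cast this

lemma sconf_coord_le {a b k : ℕ} {D : Fin b → ℤ} (h : Sconf a b k D) (i : Fin b) :
    D i ≤ mm a b (b - 1) := by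
  have h1 := h.2 1 le_rfl (by omega)
  by_contra hc
  push_neg at hc
  have : i ∈ Finset.univ.filter fun j => mm a b (b - 1) < D j := by
    simp only [Finset.mem_filter, Finset.mem_univ, true_and]; exact hc
  have : 0 < cnt D (mm a b (b - 1)) := Finset.card_pos.mpr ⟨i, this⟩
  omega

lemma kskeletal_iff {a b k : ℕ} (hk : k < b) (D : Fin b → ℤ) :
    KSkeletal a b k D ↔
      Sconf a b k D ∧ ∀ T : Finset (Fin b), T.Nonempty → ¬ Sconf a b k (cborrow a b T D) := by
  unfold KSkeletal
  rw [kstable_iff_sconf hk]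
  constructor
  · rintro ⟨h1, h2⟩
    refine ⟨h1, fun T hT hc => ?_⟩
    exact h2 T hT (fun i => hc.1 i) ((kstable_iff_sconf hk _).mpr hc)
  · rintro ⟨h1, h2⟩
    exact ⟨h1, fun T hT _ hc => h2 T hT ((kstable_iff_sconf hk _).mp hc)⟩

lemma sum_ite_split {b : ℕ} (S : Finset (Fin b)) (x y : ℤ) :
    ∑ i : Fin b, (if i ∈ S then x else y) = S.card * x + ((b : ℤ) - S.card) * y := by
  have h1 : ∑ i : Fin b, (if i ∈ S then x else y)
      = ∑ i : Fin b, (y + if i ∈ S then x - y else 0) := by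
    apply Finset.sum_congr rfl
    intro i _
    by_cases hi : i ∈ S <;> simp [hi]
  rw [h1, Finset.sum_add_distrib, Finset.sum_const, Finset.sum_ite_mem]
  simp [Finset.univ_inter, Finset.sum_const, Finset.card_univ]
  ring

/-- Decomposition of a pair of stable configurations in the same coset with increasing sum. -/
lemma decomp {a b k : ℕ} (ha : 0 < a) (hb : 0 < b) {D E : Fin b → ℤ}
    (hD : Sconf a b k D) (hE : Sconf a b k E) (hrel : Rel a D E) (hsum : ssum D < ssum E) :
    ∃ (S : Finset (Fin b)) (r : ℤ), S.Nonempty ∧ 1 ≤ r ∧ r ≤ (a : ℤ) - 1 ∧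
      (∀ i, E i = D i + (if i ∈ S then (a : ℤ) else 0) - r) := by
  obtain ⟨c, hc⟩ := hrel
  set c' := c % a with hc'
  have ha' : (0 : ℤ) < a := by exact_mod_cast ha
  have hc'0 : 0 ≤ c' := Int.emod_nonneg c (by omega)
  have hc'a : c' < a := Int.emod_lt_of_pos c ha'
  have hdvd : ∀ i, (a : ℤ) ∣ (E i - D i - c') := by
    intro i
    have h1 := hc i
    have h2 : (a : ℤ) ∣ c - c' := Int.dvd_self_sub_of_emod_eq rfl
    have e : E i - D i - c' = (E i - D i - c) + (c - c') := by ring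
    rw [e]; exact dvd_add h1 h2
  have hbound : ∀ i, -((a:ℤ) - 1) ≤ E i - D i ∧ E i - D i ≤ (a:ℤ) - 1 := by
    intro i
    have l1 := hD.1 i; have l2 := hE.1 i
    have u1 := sconf_coord_le hD i; have u2 := sconf_coord_le hE i
    have hm : mm a b (b-1) < a := mm_lt_a ha hb (by omega)
    constructor <;> omega
  have hcases : ∀ i, E i - D i = c' ∨ E i - D i = c' - a := by
    intro i
    obtain ⟨t, ht⟩ := hdvd i
    have hb1 := (hbound i).1; have hb2 := (hbound i).2
    have ht' : E i - D i = c' + a * t := by omega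
    have h1 : t < 1 := by nlinarith
    have h2 : -2 < t := by nlinarith
    interval_cases t
    · right; omega
    · left; omega
  by_cases hc0 : c' = 0
  · exfalso
    have : ∀ i, E i = D i := by
      intro i
      rcases hcases i with h | h
      · omega
      · have := (hbound i).1; omega
    have : ssum E = ssum D := Finset.sum_congr rfl (fun i _ => this i)
    omega
  · set S := Finset.univ.filter (fun i => E i - D i = c') with hS
    refine ⟨S, a - c', ?_, by omega, by omega, ?_⟩
    · by_contra hne
      rw [Finset.not_nonempty_iff_eq_empty] at hne
      have hall : ∀ i, E i = D i + c' - a := by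
        intro i
        rcases hcases i with h | h
        · exfalso
          have : i ∈ S := by simp [hS, h]
          rw [hne] at this; exact absurd this (Finset.notMem_empty i)
        · omega
      have : ssum E = ssum D + (c' - a) * b := by
        unfold ssum
        rw [Finset.sum_congr rfl (fun i _ => hall i)]
        rw [show (fun (i : Fin b) => D i + c' - (a:ℤ)) = (fun i => D i + (c' - a)) from funext (fun i => by ring)]
        rw [Finset.sum_add_distrib, Finset.sum_const, Finset.card_univ]
        simp [mul_comm]
      nlinarith [this]
    · intro i
      by_cases hi : i ∈ S
      · simp only [hi, if_true]
        have : E i - D i = c' := by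
          have := hi; simp only [hS, Finset.mem_filter, Finset.mem_univ, true_and] at this
          exact this
        omega
      · simp only [hi, if_false]
        have hni : ¬ (E i - D i = c') := by
          intro h; exact hi (by simp [hS, h])
        rcases hcases i with h | h
        · exact absurd h hni
        · omega

lemma ssum_decomp {a b : ℕ} {D E : Fin b → ℤ} {S : Finset (Fin b)} {r : ℤ}
    (h : ∀ i, E i = D i + (if i ∈ S then (a : ℤ) else 0) - r) :
    ssum E = ssum D + S.card * a - (b : ℤ) * r := by
  unfold ssum
  rw [Finset.sum_congr rfl (fun i _ => h i)]
  have : ∑ i : Fin b, (D i + (if i ∈ S then (a:ℤ) else 0) - r)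
      = ∑ i : Fin b, D i + ∑ i : Fin b, (if i ∈ S then (a:ℤ) else 0) - ∑ i : Fin b, r := by
    rw [Finset.sum_sub_distrib, Finset.sum_add_distrib]
  rw [this, sum_ite_split, Finset.sum_const, Finset.card_univ]
  simp only [mul_zero, add_zero, smul_eq_mul, Fintype.card_fin]
  ring


lemma cborrow_univ {a b : ℕ} (hb : 0 < b) (D : Fin b → ℤ) :
    cborrow a b Finset.univ D = fun i => D i + 1 := by
  funext i
  unfold cborrow
  simp [Finset.card_univ, Nat.sub_self]

/-- THE DESCENT LEMMA: if `D` is stable and some stable configuration in the same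
coset has bigger sum, then some borrow move on `D` yields a stable configuration. -/
lemma descent {a b k : ℕ} (ha : 0 < a) (hb : 0 < b) (hab : a.Coprime b) (hk : k < b) :
    ∀ n : ℕ, ∀ D G : Fin b → ℤ, Sconf a b k D → Sconf a b k G → Rel a D G →
      ssum D < ssum G → (ssum G - ssum D).toNat ≤ n →
      ∃ T : Finset (Fin b), T.Nonempty ∧ Sconf a b k (cborrow a b T D) := by
  intro n
  induction n with
  | zero => intro D G _ _ _ hsum hle; omega
  | succ n IH =>
    intro D G hD hG hrel hsum hle
    obtain ⟨S, r, hSne, hr1, hr2, hform⟩ := decomp ha hb hD hG hrel hsum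
    have hsum_eq : ssum G = ssum D + S.card * a - (b : ℤ) * r := by
      exact ssum_decomp hform
    have hScard_le : S.card ≤ b := by
      have := Finset.card_le_card (Finset.subset_univ S)
      simpa [Finset.card_univ] using this
    have hs1 : 1 ≤ S.card := Finset.card_pos.mpr hSne
    by_cases hsb : S.card = b
    -- Case S = univ : D + 1 ≤ G, so D+1 is stable
    · have hSuniv : S = Finset.univ := Finset.eq_univ_of_card S (by simp [hsb, Finset.card_univ])
      refine ⟨Finset.univ, ⟨⟨0, hb⟩, Finset.mem_univ _⟩, ?_⟩
      rw [cborrow_univ hb]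
      apply sconf_sandwich hG
      · intro i; have := hD.1 i; omega
      · intro i
        rw [hform i, hSuniv]
        simp only [Finset.mem_univ, if_true]
        omega
    -- now S.card < b
    · have hsb' : S.card < b := lt_of_le_of_ne hScard_le hsb
      have hf5 := mm_strict hab (j := S.card) hs1 hsb'
      -- r ≤ m s
      have hrms : r ≤ mm a b S.card := by
        have h1 : 0 < (S.card : ℤ) * a - (b:ℤ) * r := by omega
        have h2 : (S.card : ℤ) * a < b * mm a b S.card + b := hf5.2
        have hb' : (0:ℤ) < b := by exact_mod_cast hb
        nlinarith
      by_cases hreq : r = mm a b S.card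
      -- Case r = m s : the borrow by S lands exactly on G
      · refine ⟨S, hSne, ?_⟩
        have hceq : cborrow a b S D = G := by
          funext i
          unfold cborrow
          rw [hform i]
          by_cases hi : i ∈ S
          · simp only [hi, if_true]
            have hcompl := mm_compl hab hs1 hsb'
            unfold mm at hcompl hreq
            omega
          · simp only [hi, if_false]
            unfold mm at hreq
            omega
        rw [hceq]; exact hG
      -- Case r < m s
      · have hrlt : r ≤ mm a b S.card - 1 := by
          have := lt_of_le_of_ne hrms hreq; omega
        have hgap : (b : ℤ) + 1 ≤ ssum G - ssum D := by
          have h1 : (b:ℤ) * mm a b S.card < S.card * a := hf5.1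
          have hb' : (0:ℤ) < b := by exact_mod_cast hb
          have h2 : (b:ℤ) * r ≤ b * (mm a b S.card - 1) := by
            apply mul_le_mul_of_nonneg_left hrlt (le_of_lt hb')
          have h3 : (b:ℤ) * (mm a b S.card - 1) = b * mm a b S.card - b := by ring
          omega
        by_cases hpos : ∀ i, 1 ≤ G i
        -- Sub-case min G ≥ 1 : recurse with G - 1
        · obtain ⟨c, hc⟩ := hrel
          apply IH D (fun i => G i - 1) hD
          · apply sconf_sandwich hG
            · intro i; have := hpos i; omega
            · intro i; omega
          · refine ⟨c - 1, fun i => ?_⟩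
            have := hc i
            have e : (G i - 1) - D i - (c - 1) = G i - D i - c := by ring
            rw [e]; exact this
          · have : ssum (fun i => G i - 1) = ssum G - b := by
              unfold ssum
              rw [Finset.sum_sub_distrib, Finset.sum_const, Finset.card_univ]
              simp
            omega
          · have : ssum (fun i => G i - 1) = ssum G - b := by
              unfold ssum
              rw [Finset.sum_sub_distrib, Finset.sum_const, Finset.card_univ]
              simp
            omega
        -- Sub-case min G = 0 : the closure construction
        · push_neg at hpos
          obtain ⟨i₀, hi₀⟩ := hpos
          have hi₀0 : G i₀ = 0 := le_antisymm (by omega) (hG.1 i₀)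
          -- z = number of coordinates ≤ 0
          set zc := (Finset.univ.filter fun i => G i ≤ 0).card with hzc
          have hzcnt : zc + cnt G 0 = b := by
            unfold cnt
            rw [hzc]
            have := Finset.card_filter_add_card_filter_not
              (s := (Finset.univ : Finset (Fin b))) (p := fun i => G i ≤ 0)
            simp only [not_le, Finset.card_univ, Fintype.card_fin] at this
            convert this using 2
          have hz1 : 1 ≤ zc := by
            rw [hzc]
            apply Finset.card_pos.mpr
            exact ⟨i₀, by simp [hi₀0]⟩
          -- S-coordinates are large
          have hSbig : ∀ i ∈ S, mm a b (b - S.card) < G i := by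
            intro i hi
            rw [hform i]
            simp only [hi, if_true]
            have hcompl := mm_compl hab hs1 hsb'
            have := hD.1 i
            omega
          have hScnt : S.card ≤ cnt G (mm a b (b - S.card)) := by
            unfold cnt
            apply Finset.card_le_card
            intro i hi
            simp only [Finset.mem_filter, Finset.mem_univ, true_and]
            exact hSbig i hi
          have hzS : zc ≤ b - S.card := by
            rw [hzc]
            have hsub : (Finset.univ.filter fun i => G i ≤ 0) ⊆ Sᶜ := by
              intro i hi
              simp only [Finset.mem_filter, Finset.mem_univ, true_and] at hi
              simp only [Finset.mem_compl]
              intro hiS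
              have := hSbig i hiS
              have := mm_nonneg a b (b - S.card)
              omega
            have := Finset.card_le_card hsub
            rw [Finset.card_compl] at this
            simpa [Finset.card_univ] using this
          -- the closure index y
          have hPex : zc ≤ b - S.card ∧ b - (b - S.card) ≤ cnt G (mm a b (b - S.card)) := by
            constructor
            · exact hzS
            · have : b - (b - S.card) = S.card := by omega
              rw [this]; exact hScnt
          set P : ℕ → Prop := fun w => zc ≤ w ∧ b - w ≤ cnt G (mm a b w) with hP
          have hPdec : DecidablePred P := fun w => by unfold P; infer_instance
          have hPex' : ∃ w, P w := ⟨b - S.card, hPex⟩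
          set y := @Nat.find P hPdec hPex' with hy
          have hPy : P y := @Nat.find_spec P hPdec hPex'
          have hymin : ∀ w, w < y → ¬ P w := fun w hw => @Nat.find_min P hPdec hPex' _ hw
          have hyle : y ≤ b - S.card := @Nat.find_min' P hPdec hPex' _ hPex
          have hzy : zc ≤ y := hPy.1
          have hy1 : 1 ≤ y := le_trans hz1 hzy
          have hyb : y < b := by omega
          have hf5y := mm_strict hab (j := y) hy1 hyb
          have hmya : mm a b y < a := mm_lt_a ha hb hyb
          -- the set Y
          set Y := (Finset.univ.filter fun i => G i ≤ mm a b y) with hY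
          have hYcnt : Y.card + cnt G (mm a b y) = b := by
            unfold cnt
            rw [hY]
            have := Finset.card_filter_add_card_filter_not
              (s := (Finset.univ : Finset (Fin b))) (p := fun i => G i ≤ mm a b y)
            simp only [not_le, Finset.card_univ, Fintype.card_fin] at this
            convert this using 2
          have hYle : Y.card ≤ y := by
            have := hPy.2
            have := cnt_le G (mm a b y)
            omega
          have hYge : y ≤ Y.card := by
            rcases Nat.eq_or_lt_of_le hzy with heq | hlt
            · -- y = zc : Y contains all zeros
              have hsub : (Finset.univ.filter fun i => G i ≤ 0) ⊆ Y := by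
                intro i hi
                rw [hY]
                simp only [Finset.mem_filter, Finset.mem_univ, true_and] at hi ⊢
                have := mm_nonneg a b y
                omega
              have := Finset.card_le_card hsub
              omega
            · -- zc ≤ y - 1 < y : minimality at y - 1
              have hw := hymin (y - 1) (by omega)
              simp only [hP] at hw
              push_neg at hw
              have hcnty1 : cnt G (mm a b (y-1)) < b - (y-1) := hw (by omega)
              have hsub : (Finset.univ.filter fun i => G i ≤ mm a b (y-1)) ⊆ Y := by
                intro i hi
                rw [hY]
                simp only [Finset.mem_filter, Finset.mem_univ, true_and] at hi ⊢
                exact le_trans hi (mm_mono a b (by omega))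
              have hcard1 : (Finset.univ.filter fun i => G i ≤ mm a b (y-1)).card
                  + cnt G (mm a b (y-1)) = b := by
                unfold cnt
                have := Finset.card_filter_add_card_filter_not
                  (s := (Finset.univ : Finset (Fin b))) (p := fun i => G i ≤ mm a b (y-1))
                simp only [not_le, Finset.card_univ, Fintype.card_fin] at this
                convert this using 2
              have := Finset.card_le_card hsub
              omega
          have hYcard : Y.card = y := le_antisymm hYle hYge
          -- the new configuration W
          set W : Fin b → ℤ := fun i =>
            if G i ≤ mm a b y then G i + a - (mm a b y + 1) else G i - (mm a b y + 1) with hW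
          have hW0 : ∀ i, 0 ≤ W i := by
            intro i
            rw [hW]
            by_cases hi : G i ≤ mm a b y
            · simp only [hi, if_true]
              have := hG.1 i
              omega
            · simp only [hi, if_false]
              push_neg at hi
              omega
          have hWsum : ssum W = ssum G + (y : ℤ) * a - (b:ℤ) * (mm a b y + 1) := by
            have hWi : ∀ i, W i = G i + (if i ∈ Y then (a:ℤ) else 0) - (mm a b y + 1) := by
              intro i
              rw [hW, hY]
              by_cases hi : G i ≤ mm a b y
              · simp [hi]
              · simp [hi]
            unfold ssum
            rw [Finset.sum_congr rfl (fun i _ => hWi i)]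
            have : ∑ i : Fin b, (G i + (if i ∈ Y then (a:ℤ) else 0) - (mm a b y + 1))
                = ∑ i : Fin b, G i + ∑ i : Fin b, (if i ∈ Y then (a:ℤ) else 0)
                  - ∑ _i : Fin b, (mm a b y + 1) := by
              rw [Finset.sum_sub_distrib, Finset.sum_add_distrib]
            rw [this, sum_ite_split, Finset.sum_const, Finset.card_univ]
            simp only [mul_zero, add_zero, smul_eq_mul, Fintype.card_fin]
            rw [hYcard]
            push_cast
            ring
          have hWrel : Rel a D W := by
            obtain ⟨c, hc⟩ := hrel
            refine ⟨c - (mm a b y + 1), fun i => ?_⟩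
            rw [hW]
            by_cases hi : G i ≤ mm a b y
            · simp only [hi, if_true]
              have := hc i
              have e : G i + (a:ℤ) - (mm a b y + 1) - D i - (c - (mm a b y + 1))
                  = (G i - D i - c) + a := by ring
              rw [e]
              exact dvd_add (hc i) ⟨1, by ring⟩
            · simp only [hi, if_false]
              have e : G i - (mm a b y + 1) - D i - (c - (mm a b y + 1))
                  = G i - D i - c := by ring
              rw [e]
              exact hc i
          have hbmm : (b:ℤ) * (mm a b y + 1) = b * mm a b y + b := by ring
          have hWlt : ssum W < ssum G := by
            have := hf5y.2
            omega
          have hWgt : ssum D < ssum W := by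
            have := hf5y.1
            omega
          -- stability of W
          have hWst : Sconf a b k W := by
            refine ⟨hW0, fun σ h1 h2 => ?_⟩
            set q := mm a b (b - σ) with hq
            have hsplit := Finset.card_filter_add_card_filter_not
              (s := Finset.univ.filter fun i => q < W i) (p := fun i => G i ≤ mm a b y)
            set cY := ((Finset.univ.filter fun i => q < W i).filter
              (fun i => G i ≤ mm a b y)).card with hcY
            set cN := ((Finset.univ.filter fun i => q < W i).filter
              (fun i => ¬ G i ≤ mm a b y)).card with hcN
            have hcnt_eq : cnt W q = cY + cN := by
              unfold cnt
              omega
            by_cases hσy : σ ≤ y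
            -- case σ ≤ y
            · have hcN0 : cN = 0 := by
                rw [hcN, Finset.card_eq_zero]
                apply Finset.eq_empty_of_forall_notMem
                intro i hi
                simp only [Finset.mem_filter, Finset.mem_univ, true_and, not_le] at hi
                obtain ⟨hqi, hgi⟩ := hi
                rw [hW] at hqi
                simp only [not_le.mpr hgi, if_false] at hqi
                -- G i ≤ m (b-1) and m(b-1) ≤ m(b-σ) + m y + 1
                have hb1 : G i ≤ mm a b (b-1) := sconf_coord_le hG i
                have hchain : mm a b (b-1) ≤ mm a b (b-σ) + mm a b y + 1 := by
                  have e : b - 1 = (b - σ) + (σ - 1) := by omega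
                  calc mm a b (b-1) = mm a b ((b-σ) + (σ-1)) := by rw [← e]
                  _ ≤ mm a b (b-σ) + mm a b (σ-1) + 1 := mm_subadd hb _ _
                  _ ≤ mm a b (b-σ) + mm a b y + 1 := by
                      have := mm_mono a b (show σ - 1 ≤ y by omega)
                      omega
                rw [hq] at hqi
                omega
              -- bound cY
              have hcY_le : cY ≤ σ - 1 := by
                set c1 := mm a b y - mm a b σ with hc1
                have hc1nn : 0 ≤ c1 := by
                  have := mm_mono a b hσy; rw [hc1]; omega
                -- every counted i satisfies c1 < G i ≤ m y
                have hsub : ((Finset.univ.filter fun i => q < W i).filter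
                    (fun i => G i ≤ mm a b y)) ⊆
                    ((Finset.univ.filter fun i => c1 < G i).filter
                    (fun i => G i ≤ mm a b y)) := by
                  intro i hi
                  simp only [Finset.mem_filter, Finset.mem_univ, true_and] at hi ⊢
                  obtain ⟨hqi, hgi⟩ := hi
                  refine ⟨?_, hgi⟩
                  rw [hW] at hqi
                  simp only [hgi, if_true] at hqi
                  -- q < G i + a - (m y + 1), and a ≤ m(b-σ) + m σ + 1
                  have hsub2 : (a : ℤ) ≤ mm a b (b-σ) + mm a b σ + 1 := by
                    have e : b = (b - σ) + σ := by omega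
                    have h := mm_subadd (a := a) hb (b - σ) σ
                    rw [← e, mm_b hb] at h
                    exact h
                  rw [hq] at hqi
                  rw [hc1]
                  omega
                have hcard2 : ((Finset.univ.filter fun i => c1 < G i).filter
                    (fun i => G i ≤ mm a b y)).card
                    + ((Finset.univ.filter fun i => c1 < G i).filter
                    (fun i => ¬ G i ≤ mm a b y)).card = cnt G c1 := by
                  unfold cnt
                  exact Finset.card_filter_add_card_filter_not _
                have hneg_eq : ((Finset.univ.filter fun i => c1 < G i).filter
                    (fun i => ¬ G i ≤ mm a b y)) = Finset.univ.filter fun i => mm a b y < G i := by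
                  ext i
                  simp only [Finset.mem_filter, Finset.mem_univ, true_and, not_le]
                  constructor
                  · rintro ⟨_, h⟩; exact h
                  · intro h
                    have h2 := mm_nonneg a b σ
                    have h3 : c1 ≤ mm a b y := by rw [hc1]; omega
                    exact ⟨by omega, h⟩
                -- bound cnt G c1
                have hcntc1 : cnt G c1 ≤ b - y + σ - 1 := by
                  by_cases hwz : y - σ < zc
                  · -- use count of zeros
                    have : cnt G c1 ≤ cnt G 0 := cnt_anti G hc1nn
                    omega
                  · push_neg at hwz
                    have hw := hymin (y - σ) (by omega)
                    simp only [hP] at hw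
                    push_neg at hw
                    have hcntw : cnt G (mm a b (y - σ)) < b - (y - σ) := hw hwz
                    have hmw : mm a b (y - σ) ≤ c1 := by
                      have := mm_superadd a b (y - σ) σ
                      rw [show y - σ + σ = y by omega] at this
                      rw [hc1]; omega
                    have := cnt_anti G hmw
                    omega
                have hsubcard := Finset.card_le_card hsub
                have hcnty := hPy.2
                rw [hneg_eq] at hcard2
                have : ((Finset.univ.filter fun i => mm a b y < G i)).card = cnt G (mm a b y) := rfl
                rw [hcY]
                omega
              omega
            -- case σ > y
            · push_neg at hσy
              have hcY_le : cY ≤ y := by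
                have hsub : ((Finset.univ.filter fun i => q < W i).filter
                    (fun i => G i ≤ mm a b y)) ⊆ Y := by
                  intro i hi
                  simp only [hY, Finset.mem_filter, Finset.mem_univ, true_and] at hi ⊢
                  exact hi.2
                have := Finset.card_le_card hsub
                omega
              have hcN_le : cN < σ - y := by
                have hlev : 1 ≤ σ - y ∧ σ - y ≤ k + 1 := by omega
                have hstab := hG.2 (σ - y) hlev.1 hlev.2
                have hsub : ((Finset.univ.filter fun i => q < W i).filter
                    (fun i => ¬ G i ≤ mm a b y)) ⊆
                    Finset.univ.filter fun i => mm a b (b - (σ - y)) < G i := by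
                  intro i hi
                  simp only [Finset.mem_filter, Finset.mem_univ, true_and, not_le] at hi ⊢
                  obtain ⟨hqi, hgi⟩ := hi
                  rw [hW] at hqi
                  simp only [not_le.mpr hgi, if_false] at hqi
                  have hch : mm a b (b - (σ - y)) ≤ mm a b (b - σ) + mm a b y + 1 := by
                    have e : b - (σ - y) = (b - σ) + y := by omega
                    rw [e]
                    exact mm_subadd hb _ _
                  rw [hq] at hqi
                  omega
                have := Finset.card_le_card hsub
                unfold cnt at hstab
                omega
              omega
          -- recurse
          apply IH D W hD hWst hWrel hWgt
          omega


lemma exists_nonneg_rep {a b : ℕ} (ha : 0 < a) (D : Fin b → ℤ) :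
    ∃ R : Fin b → ℤ, Rel a D R ∧ ∀ i, 0 ≤ R i := by
  have ha' : (a : ℤ) ≠ 0 := by positivity
  refine ⟨fun i => D i % a, ⟨0, fun i => ?_⟩, fun i => Int.emod_nonneg _ ha'⟩
  have := Int.emod_add_mul_ediv (D i) a
  exact ⟨-(D i / a), by linarith [this]⟩

lemma fire_step {a b k : ℕ} (ha : 0 < a) (hb : 0 < b) (hab : a.Coprime b) (hk : k < b)
    {R : Fin b → ℤ} (h0 : ∀ i, 0 ≤ R i) (hns : ¬ Sconf a b k R) :
    ∃ R' : Fin b → ℤ, Rel a R R' ∧ (∀ i, 0 ≤ R' i) ∧ ssum R' < ssum R := by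
  unfold Sconf at hns
  push_neg at hns
  obtain ⟨σ, h1, h2, hcnt⟩ := hns h0
  obtain ⟨S, hSsub, hScard⟩ := Finset.exists_subset_card_eq hcnt
  have hSmem : ∀ i ∈ S, mm a b (b - σ) < R i := by
    intro i hi
    have := hSsub hi
    simpa using this
  by_cases hσb : σ = b
  -- fire everything : subtract 1
  · have hSuniv : S = Finset.univ := Finset.eq_univ_of_card S (by simp [hScard, hσb])
    refine ⟨fun i => R i - 1, ⟨-1, fun i => ⟨0, by ring⟩⟩, fun i => ?_, ?_⟩
    · show 0 ≤ R i - 1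
      have : mm a b (b - σ) < R i := hSmem i (hSuniv ▸ Finset.mem_univ i)
      have := mm_nonneg a b (b - σ)
      omega
    · show ssum (fun i => R i - 1) < ssum R
      unfold ssum
      rw [Finset.sum_sub_distrib, Finset.sum_const, Finset.card_univ]
      simp only [nsmul_eq_mul, smul_eq_mul, mul_one, Fintype.card_fin]
      have : (0:ℤ) < b := by exact_mod_cast hb
      omega
  · have hσb' : σ < b := by omega
    have hcompl := mm_compl hab h1 hσb'
    have hf5 := mm_strict hab h1 hσb'
    refine ⟨fun i => R i + mm a b σ - (if i ∈ S then (a:ℤ) else 0), ⟨mm a b σ, fun i => ?_⟩,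
      fun i => ?_, ?_⟩
    · by_cases hi : i ∈ S
      · simp only [hi, if_true]
        exact ⟨-1, by ring⟩
      · simp only [hi, if_false]
        exact ⟨0, by ring⟩
    · by_cases hi : i ∈ S
      · simp only [hi, if_true]
        have := hSmem i hi
        omega
      · simp only [hi, if_false]
        have := h0 i
        have := mm_nonneg a b σ
        omega
    · have e : ssum (fun i => R i + mm a b σ - (if i ∈ S then (a:ℤ) else 0))
          = ssum R + (b:ℤ) * mm a b σ - S.card * a := by
        unfold ssum
        have : ∀ i : Fin b, R i + mm a b σ - (if i ∈ S then (a:ℤ) else 0)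
            = R i + (mm a b σ - if i ∈ S then (a:ℤ) else 0) := fun i => by ring
        rw [Finset.sum_congr rfl (fun i _ => this i), Finset.sum_add_distrib,
          Finset.sum_sub_distrib, Finset.sum_const, Finset.card_univ, sum_ite_split]
        simp only [smul_eq_mul, Fintype.card_fin]
        ring
      rw [e, hScard]
      have := hf5.1
      omega

lemma exists_stable_rep {a b k : ℕ} (ha : 0 < a) (hb : 0 < b) (hab : a.Coprime b) (hk : k < b)
    (R : Fin b → ℤ) (h0 : ∀ i, 0 ≤ R i) :
    ∃ E : Fin b → ℤ, Rel a R E ∧ Sconf a b k E := by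
  obtain ⟨n, hn⟩ : ∃ n, (ssum R).toNat ≤ n := ⟨(ssum R).toNat, le_rfl⟩
  induction n generalizing R with
  | zero =>
    by_cases hs : Sconf a b k R
    · exact ⟨R, rel_refl a R, hs⟩
    · obtain ⟨R', hrel, h0', hlt⟩ := fire_step ha hb hab hk h0 hs
      have hR0 : 0 ≤ ssum R := Finset.sum_nonneg (fun i _ => h0 i)
      have hR'0 : 0 ≤ ssum R' := Finset.sum_nonneg (fun i _ => h0' i)
      omega
  | succ n IH =>
    by_cases hs : Sconf a b k R
    · exact ⟨R, rel_refl a R, hs⟩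
    · obtain ⟨R', hrel, h0', hlt⟩ := fire_step ha hb hab hk h0 hs
      have hR'0 : 0 ≤ ssum R' := Finset.sum_nonneg (fun i _ => h0' i)
      obtain ⟨E, hrel', hE⟩ := IH R' h0' (by omega)
      exact ⟨E, rel_trans hrel hrel', hE⟩

lemma cborrow_rel {a b : ℕ} (ha : 0 < a) (hb : 0 < b) (hab : a.Coprime b)
    (T : Finset (Fin b)) (hT : T.Nonempty) (E : Fin b → ℤ) :
    Rel a E (cborrow a b T E) := by
  have hTcard : T.card ≤ b := by
    have := Finset.card_le_card (Finset.subset_univ T)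
    simpa [Finset.card_univ] using this
  have hT1 : 1 ≤ T.card := Finset.card_pos.mpr hT
  by_cases hTb : T.card = b
  · refine ⟨1, fun i => ?_⟩
    have hTuniv : T = Finset.univ := Finset.eq_univ_of_card T (by simp [hTb])
    unfold cborrow
    simp only [hTuniv, Finset.mem_univ, if_true, Finset.card_univ, Fintype.card_fin,
      Nat.sub_self]
    exact ⟨0, by simp [mm_zero]⟩
  · have hTb' : T.card < b := by omega
    have hcompl := mm_compl hab hT1 hTb'
    refine ⟨-(mm a b T.card), fun i => ?_⟩
    unfold cborrow
    by_cases hi : i ∈ T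
    · simp only [hi, if_true]
      refine ⟨1, ?_⟩
      unfold mm at hcompl ⊢
      omega
    · simp only [hi, if_false]
      exact ⟨0, by unfold mm; ring⟩

lemma cborrow_sum {a b : ℕ} (ha : 0 < a) (hb : 0 < b) (hab : a.Coprime b)
    (T : Finset (Fin b)) (hT : T.Nonempty) (E : Fin b → ℤ) :
    ssum E < ssum (cborrow a b T E) := by
  have hTcard : T.card ≤ b := by
    have := Finset.card_le_card (Finset.subset_univ T)
    simpa [Finset.card_univ] using this
  have hT1 : 1 ≤ T.card := Finset.card_pos.mpr hT
  have e : ssum (cborrow a b T E) = ssum E + (T.card : ℤ) * (1 + mm a b (b - T.card))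
      + ((b : ℤ) - T.card) * (-(mm a b T.card)) := by
    unfold ssum cborrow
    have : ∀ i : Fin b, (if i ∈ T then E i + 1 + ((( b - T.card) * a / b : ℕ) : ℤ)
        else E i - ((T.card * a / b : ℕ) : ℤ))
        = E i + (if i ∈ T then 1 + mm a b (b - T.card) else -(mm a b T.card)) := by
      intro i
      unfold mm
      by_cases hi : i ∈ T <;> simp [hi] <;> ring
    rw [Finset.sum_congr rfl (fun i _ => this i), Finset.sum_add_distrib, sum_ite_split]
    ring
  rw [e]
  by_cases hTb : T.card = b
  · rw [hTb]
    simp only [Nat.sub_self, mm_zero, sub_self, mul_zero]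
    have : (0:ℤ) < b := by exact_mod_cast hb
    nlinarith
  · have hTb' : T.card < b := by omega
    have hcompl := mm_compl hab hT1 hTb'
    have hf5 := mm_strict hab hT1 hTb'
    have hbT : ((b - T.card : ℕ) : ℤ) = (b:ℤ) - T.card := by
      push_cast [Nat.cast_sub (le_of_lt hTb')]; ring
    nlinarith [hf5.1]

lemma exists_skeletal_above {a b k : ℕ} (ha : 0 < a) (hb : 0 < b) (hab : a.Coprime b)
    (hk : k < b) (E : Fin b → ℤ) (hE : Sconf a b k E) :
    ∃ E' : Fin b → ℤ, Rel a E E' ∧ KSkeletal a b k E' := by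
  obtain ⟨n, hn⟩ : ∃ n, ((b : ℤ) * mm a b (b-1) - ssum E).toNat ≤ n :=
    ⟨_, le_rfl⟩
  induction n generalizing E with
  | zero =>
    by_cases hsk : ∀ T : Finset (Fin b), T.Nonempty → ¬ Sconf a b k (cborrow a b T E)
    · exact ⟨E, rel_refl a E, (kskeletal_iff hk E).mpr ⟨hE, hsk⟩⟩
    · push_neg at hsk
      obtain ⟨T, hT, hTs⟩ := hsk
      exfalso
      have h1 := cborrow_sum ha hb hab T hT E
      have h2 : ssum (cborrow a b T E) ≤ (b:ℤ) * mm a b (b-1) := by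
        calc ssum (cborrow a b T E) ≤ ∑ _i : Fin b, mm a b (b-1) :=
          Finset.sum_le_sum (fun i _ => sconf_coord_le hTs i)
        _ = (b:ℤ) * mm a b (b-1) := by
          rw [Finset.sum_const, Finset.card_univ]; simp [mul_comm]
      omega
  | succ n IH =>
    by_cases hsk : ∀ T : Finset (Fin b), T.Nonempty → ¬ Sconf a b k (cborrow a b T E)
    · exact ⟨E, rel_refl a E, (kskeletal_iff hk E).mpr ⟨hE, hsk⟩⟩
    · push_neg at hsk
      obtain ⟨T, hT, hTs⟩ := hsk
      have h1 := cborrow_sum ha hb hab T hT E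
      have h2 : ssum (cborrow a b T E) ≤ (b:ℤ) * mm a b (b-1) := by
        calc ssum (cborrow a b T E) ≤ ∑ _i : Fin b, mm a b (b-1) :=
          Finset.sum_le_sum (fun i _ => sconf_coord_le hTs i)
        _ = (b:ℤ) * mm a b (b-1) := by
          rw [Finset.sum_const, Finset.card_univ]; simp [mul_comm]
      obtain ⟨E', hrel', hE'⟩ := IH (cborrow a b T E) hTs (by omega)
      exact ⟨E', rel_trans (cborrow_rel ha hb hab T hT E) hrel', hE'⟩

/-- Two stable configurations in the same coset with equal sums are equal. -/
lemma eq_of_rel_of_sum_eq {a b k : ℕ} (ha : 0 < a) (hb : 0 < b) (hab : a.Coprime b)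
    {D E : Fin b → ℤ} (hD : Sconf a b k D) (hE : Sconf a b k E) (hrel : Rel a D E)
    (hsum : ssum D = ssum E) : D = E := by
  obtain ⟨c, hc⟩ := hrel
  set c' := c % a with hc'
  have ha' : (0 : ℤ) < a := by exact_mod_cast ha
  have hc'0 : 0 ≤ c' := Int.emod_nonneg c (by omega)
  have hc'a : c' < a := Int.emod_lt_of_pos c ha'
  have hdvd : ∀ i, (a : ℤ) ∣ (E i - D i - c') := by
    intro i
    have h2 : (a : ℤ) ∣ c - c' := Int.dvd_self_sub_of_emod_eq rfl
    have e : E i - D i - c' = (E i - D i - c) + (c - c') := by ring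
    rw [e]; exact dvd_add (hc i) h2
  have hbound : ∀ i, -((a:ℤ) - 1) ≤ E i - D i ∧ E i - D i ≤ (a:ℤ) - 1 := by
    intro i
    have l1 := hD.1 i; have l2 := hE.1 i
    have u1 := sconf_coord_le hD i; have u2 := sconf_coord_le hE i
    have hm : mm a b (b-1) < a := mm_lt_a ha hb (by omega)
    constructor <;> omega
  have hcases : ∀ i, E i - D i = c' ∨ E i - D i = c' - a := by
    intro i
    obtain ⟨t, ht⟩ := hdvd i
    have hb1 := (hbound i).1; have hb2 := (hbound i).2
    have ht' : E i - D i = c' + a * t := by omega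
    have h1 : t < 1 := by nlinarith
    have h2 : -2 < t := by nlinarith
    interval_cases t
    · right; omega
    · left; omega
  by_cases hc0 : c' = 0
  · funext i
    rcases hcases i with h | h
    · omega
    · have := (hbound i).1; omega
  · exfalso
    set S := Finset.univ.filter (fun i => E i - D i = c') with hS
    have hform : ∀ i, E i = D i + (if i ∈ S then (a : ℤ) else 0) - (a - c') := by
      intro i
      by_cases hi : i ∈ S
      · simp only [hi, if_true]
        have : E i - D i = c' := by
          have := hi; simp only [hS, Finset.mem_filter, Finset.mem_univ, true_and] at this
          exact this
        omega
      · simp only [hi, if_false]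
        have hni : ¬ (E i - D i = c') := fun h => hi (by simp [hS, h])
        rcases hcases i with h | h
        · exact absurd h hni
        · omega
    have hsum2 := ssum_decomp hform
    -- b * c' = (b - S.card) * a  and  coprimality forces c' = 0
    have heq : (S.card : ℤ) * a = (b : ℤ) * (a - c') := by omega
    have hdvd2 : (a : ℤ) ∣ (b : ℤ) * c' := by
      refine ⟨(b : ℤ) - S.card, ?_⟩
      have : (b:ℤ) * c' = b * a - b * (a - c') := by ring
      rw [this, ← heq]
      ring
    have hcop : IsCoprime (a : ℤ) (b : ℤ) := Nat.isCoprime_iff_coprime.mpr hab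
    have : (a : ℤ) ∣ c' := hcop.dvd_of_dvd_mul_left hdvd2
    obtain ⟨u, hu⟩ := this
    have h1 : u < 1 := by nlinarith
    have h2 : 0 < u + 1 := by nlinarith
    have hu0 : u = 0 := by omega
    rw [hu0, mul_zero] at hu
    omega

/-- Uniqueness of the skeletal configuration in a coset. -/
lemma skeletal_unique {a b k : ℕ} (ha : 0 < a) (hb : 0 < b) (hab : a.Coprime b) (hk : k < b)
    {D E : Fin b → ℤ} (hD : KSkeletal a b k D) (hE : KSkeletal a b k E) (hrel : Rel a D E) :
    D = E := by
  obtain ⟨hDs, hDb⟩ := (kskeletal_iff hk D).mp hD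
  obtain ⟨hEs, hEb⟩ := (kskeletal_iff hk E).mp hE
  rcases lt_trichotomy (ssum D) (ssum E) with h | h | h
  · exfalso
    obtain ⟨T, hT, hTs⟩ := descent ha hb hab hk (ssum E - ssum D).toNat D E hDs hEs hrel h le_rfl
    exact hDb T hT hTs
  · exact eq_of_rel_of_sum_eq ha hb hab hDs hEs hrel h
  · exfalso
    obtain ⟨T, hT, hTs⟩ := descent ha hb hab hk (ssum D - ssum E).toNat E D hEs hDs
      (rel_symm hrel) h le_rfl
    exact hEb T hT hTs


/-- the subgroup of vectors congruent to a constant mod `a` -/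
def KRel (a b : ℕ) : AddSubgroup (Fin b → ℤ) where
  carrier := {v | ∃ c : ℤ, ∀ i, (a : ℤ) ∣ (v i - c)}
  zero_mem' := ⟨0, fun i => by simp⟩
  add_mem' := by
    rintro v w ⟨c1, h1⟩ ⟨c2, h2⟩
    refine ⟨c1 + c2, fun i => ?_⟩
    have := dvd_add (h1 i) (h2 i)
    have e : (v i - c1) + (w i - c2) = (v + w) i - (c1 + c2) := by
      simp [Pi.add_apply]; ring
    rwa [e] at this
  neg_mem' := by
    rintro v ⟨c, h⟩
    refine ⟨-c, fun i => ?_⟩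
    have := (h i).neg_right
    have e : (-v) i - -c = -(v i - c) := by simp [Pi.neg_apply]; ring
    rw [e]
    exact dvd_neg.mpr (h i)

lemma mem_Kgrp_iff {a b : ℕ} (ha : 0 < a) (v : Fin b → ℤ) :
    v ∈ Kgrp a b ↔ ∃ c : ℤ, ∀ i, (a : ℤ) ∣ (v i - c) := by
  constructor
  · intro hv
    have hle : Kgrp a b ≤ KRel a b := by
      rw [Kgrp, AddSubgroup.closure_le]
      rintro x (hx | ⟨j, rfl⟩)
      · rw [Set.mem_singleton_iff] at hx
        subst hx
        exact ⟨1, fun i => by simp⟩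
      · exact ⟨0, fun i => by by_cases h : i = j <;> simp [h]⟩
    exact hle hv
  · rintro ⟨c, hc⟩
    have h1 : (fun _ : Fin b => (1:ℤ)) ∈ Kgrp a b :=
      AddSubgroup.subset_closure (Or.inl rfl)
    have he : ∀ j : Fin b, (fun i => if i = j then (a:ℤ) else 0) ∈ Kgrp a b :=
      fun j => AddSubgroup.subset_closure (Or.inr ⟨j, rfl⟩)
    have hv : v = c • (fun _ : Fin b => (1:ℤ))
        + ∑ j : Fin b, ((v j - c) / a) • (fun i => if i = j then (a:ℤ) else 0) := by
      funext i
      simp only [Pi.add_apply, Pi.smul_apply, smul_eq_mul, mul_one, Finset.sum_apply]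
      rw [Finset.sum_eq_single i]
      · simp only [if_true, eq_self_iff_true]
        rw [Int.ediv_mul_cancel (hc i)]
        ring
      · intro j _ hji
        simp [Ne.symm hji]
      · intro h
        exact absurd (Finset.mem_univ i) h
    rw [hv]
    exact AddSubgroup.add_mem _ (AddSubgroup.zsmul_mem _ h1 c)
      (AddSubgroup.sum_mem _ (fun j _ => AddSubgroup.zsmul_mem _ (he j) _))

lemma sub_mem_Kgrp_iff_rel {a b : ℕ} (ha : 0 < a) (D E : Fin b → ℤ) :
    E - D ∈ Kgrp a b ↔ Rel a D E := by
  rw [mem_Kgrp_iff ha]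
  unfold Rel
  constructor
  · rintro ⟨c, hc⟩
    exact ⟨c, fun i => by have := hc i; simpa [Pi.sub_apply] using this⟩
  · rintro ⟨c, hc⟩
    exact ⟨c, fun i => by have := hc i; simpa [Pi.sub_apply] using this⟩

/-- the homomorphism to `(ZMod a)^(b-1)` -/
def phi (a b : ℕ) (hb : 0 < b) : (Fin b → ℤ) →+ (Fin (b-1) → ZMod a) where
  toFun D := fun i => ((D ⟨i.1, lt_of_lt_of_le i.2 (Nat.sub_le b 1)⟩
    - D ⟨b-1, Nat.sub_lt hb one_pos⟩ : ℤ) : ZMod a)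
  map_zero' := by funext i; simp
  map_add' := by
    intro D E
    funext i
    simp only [Pi.add_apply]
    push_cast
    ring

lemma phi_surjective (a b : ℕ) (hb : 0 < b) : Function.Surjective (phi a b hb) := by
  intro v
  obtain ⟨u, hu⟩ : ∃ u : Fin (b-1) → ℤ, ∀ i, ((u i : ZMod a)) = v i := by
    have : ∀ i : Fin (b-1), ∃ x : ℤ, ((x : ZMod a)) = v i := fun i =>
      ZMod.intCast_surjective (v i)
    choose u hu using this
    exact ⟨u, hu⟩
  refine ⟨fun j => if h : j.1 < b - 1 then u ⟨j.1, h⟩ else 0, ?_⟩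
  funext i
  unfold phi
  simp only [AddMonoidHom.coe_mk, ZeroHom.coe_mk]
  rw [dif_pos i.2, dif_neg (by omega)]
  rw [sub_zero]
  exact hu i

lemma ker_phi (a b : ℕ) (ha : 0 < a) (hb : 0 < b) : (phi a b hb).ker = Kgrp a b := by
  ext v
  rw [AddMonoidHom.mem_ker, mem_Kgrp_iff ha]
  constructor
  · intro hv
    refine ⟨v ⟨b-1, Nat.sub_lt hb one_pos⟩, fun i => ?_⟩
    by_cases hib : i.1 < b - 1
    · have := congrFun hv ⟨i.1, hib⟩
      unfold phi at this
      simp only [AddMonoidHom.coe_mk, ZeroHom.coe_mk, Pi.zero_apply] at this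
      have h2 := (ZMod.intCast_zmod_eq_zero_iff_dvd _ a).mp this
      have e : (⟨i.1, lt_of_lt_of_le hib (Nat.sub_le b 1)⟩ : Fin b) = i := by
        apply Fin.ext; rfl
      rwa [e] at h2
    · have : i = ⟨b-1, Nat.sub_lt hb one_pos⟩ := by
        apply Fin.ext
        show i.1 = b - 1
        have := i.2
        omega
      rw [this]
      simp
  · rintro ⟨c, hc⟩
    funext i
    unfold phi
    simp only [AddMonoidHom.coe_mk, ZeroHom.coe_mk, Pi.zero_apply]
    rw [ZMod.intCast_zmod_eq_zero_iff_dvd]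
    have h1 := hc ⟨i.1, lt_of_lt_of_le i.2 (Nat.sub_le b 1)⟩
    have h2 := hc ⟨b-1, Nat.sub_lt hb one_pos⟩
    have e : v ⟨i.1, lt_of_lt_of_le i.2 (Nat.sub_le b 1)⟩ - v ⟨b-1, Nat.sub_lt hb one_pos⟩
        = (v ⟨i.1, lt_of_lt_of_le i.2 (Nat.sub_le b 1)⟩ - c)
          - (v ⟨b-1, Nat.sub_lt hb one_pos⟩ - c) := by ring
    rw [e]
    exact dvd_sub h1 h2

end QS

/-- `ℤ^b / K ≅ (ℤ/aℤ)^{b−1}`, and every coset of `K` contains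
exactly one `k`-skeletal configuration. -/
theorem quotient_structure (a b k : ℕ) (ha : 0 < a) (hb : 0 < b)
    (hab : a.Coprime b) (hk : k < b) :
    Nonempty (((Fin b → ℤ) ⧸ Kgrp a b) ≃+ (Fin (b - 1) → ZMod a)) ∧
    (∀ D : Fin b → ℤ, ∃! D' : Fin b → ℤ, D' - D ∈ Kgrp a b ∧ KSkeletal a b k D') := by
  constructor
  · refine ⟨?_⟩
    exact (QuotientAddGroup.quotientAddEquivOfEq (QS.ker_phi a b ha hb).symm).trans
      (QuotientAddGroup.quotientKerEquivOfSurjective _ (QS.phi_surjective a b hb))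
  · intro D
    obtain ⟨R, hrel1, h0⟩ := QS.exists_nonneg_rep ha D
    obtain ⟨E, hrel2, hE⟩ := QS.exists_stable_rep ha hb hab hk R h0
    obtain ⟨E', hrel3, hE'⟩ := QS.exists_skeletal_above ha hb hab hk E hE
    refine ⟨E', ⟨?_, hE'⟩, ?_⟩
    · exact (QS.sub_mem_Kgrp_iff_rel ha D E').mpr
        (QS.rel_trans (QS.rel_trans hrel1 hrel2) hrel3)
    · rintro F ⟨hFmem, hF⟩
      apply QS.skeletal_unique ha hb hab hk hF hE'
      have h1 : E' - D ∈ Kgrp a b := (QS.sub_mem_Kgrp_iff_rel ha D E').mpr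
        (QS.rel_trans (QS.rel_trans hrel1 hrel2) hrel3)
      have h2 : E' - F ∈ Kgrp a b := by
        have := AddSubgroup.sub_mem _ h1 hFmem
        have e : (E' - D) - (F - D) = E' - F := by abel
        rwa [e] at this
      exact (QS.sub_mem_Kgrp_iff_rel ha F E').mp h2
end
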